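/- arXiv:2510.00850 — 10 statements merged into one kernel-verified Lean document; each statement's English description precedes it below -/
import Mathlib

section
/- For every x : {1,...,N} → {0,1}, the set of attainable objective values coincides: {Obj(x,y) : y feasible for formulation (8) given x} = {Obj'(x,z) : z feasible for the exclusion set formulation (9) given x}. In other words, the mixed-integer linear programs (8) and (9) are equivalent. -/
/-- Constraint (a): sums of the `y` variables over the `L` most preferred products agree
across rankings whose sets of `L` most preferred products coincide. -/
def EqConstr (K : ℕ) (i : ℕ → ℕ → ℕ) (Lk : ℕ → ℕ) (y : ℕ → ℕ → ℝ) : Prop :=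
  ∀ k k' L, 1 ≤ k → k ≤ K → 1 ≤ k' → k' ≤ K → 1 ≤ L → L ≤ Lk k →
    Finset.image (i k) (Finset.Icc 1 L) = Finset.image (i k') (Finset.Icc 1 L) →
    ∑ ℓ ∈ Finset.Icc 1 L, y k ℓ = ∑ ℓ ∈ Finset.Icc 1 L, y k' ℓ

/-- Constraints (b), (c), (d): feasibility for formulation (7) given `x`. -/
def Feas7 (K : ℕ) (i : ℕ → ℕ → ℕ) (Lk : ℕ → ℕ) (x : ℕ → ℝ) (y : ℕ → ℕ → ℝ) : Prop :=
  (∀ k, 1 ≤ k → k ≤ K → ∑ ℓ ∈ Finset.Icc 1 (Lk k), y k ℓ ≤ 1) ∧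
  (∀ k ℓ, 1 ≤ k → k ≤ K → 1 ≤ ℓ → ℓ ≤ Lk k →
    x (i k ℓ) ≤ ∑ ℓ' ∈ Finset.Icc 1 ℓ, y k ℓ') ∧
  (∀ k ℓ, 1 ≤ k → k ≤ K → 1 ≤ ℓ → ℓ ≤ Lk k → 0 ≤ y k ℓ ∧ y k ℓ ≤ x (i k ℓ))

/-- Feasibility for formulation (8) given `x`: constraints (a), (b), (c), (d). -/
def Feas8 (K : ℕ) (i : ℕ → ℕ → ℕ) (Lk : ℕ → ℕ) (x : ℕ → ℝ) (y : ℕ → ℕ → ℝ) : Prop :=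
  EqConstr K i Lk y ∧ Feas7 K i Lk x y

/-- The objective value of formulations (7) and (8). -/
noncomputable def ObjY (K : ℕ) (i : ℕ → ℕ → ℕ) (Lk : ℕ → ℕ) (r lam : ℕ → ℝ)
    (y : ℕ → ℕ → ℝ) : ℝ :=
  ∑ k ∈ Finset.Icc 1 K, lam k * ∑ ℓ ∈ Finset.Icc 1 (Lk k), r (i k ℓ) * y k ℓ

/-- `E` is an exclusion set. -/
def IsExcl (K : ℕ) (i : ℕ → ℕ → ℕ) (Lk : ℕ → ℕ) (E : Finset ℕ) : Prop :=
  ∃ k, 1 ≤ k ∧ k ≤ K ∧ ∃ L, L ≤ Lk k ∧ E = Finset.image (i k) (Finset.Icc 1 L)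

/-- `(E, j)` is an exclusion set and continuation pair, i.e. `(E, j) ∈ 𝓟`. -/
def IsPair (K : ℕ) (i : ℕ → ℕ → ℕ) (Lk : ℕ → ℕ) (E : Finset ℕ) (j : ℕ) : Prop :=
  ∃ k, 1 ≤ k ∧ k ≤ K ∧ ∃ L, L + 1 ≤ Lk k ∧
    E = Finset.image (i k) (Finset.Icc 1 L) ∧ j = i k (L + 1)

/-- The probability `λ_{E,j}` of an exclusion set and continuation pair. -/
noncomputable def lamEI (K : ℕ) (i : ℕ → ℕ → ℕ) (lam : ℕ → ℝ) (E : Finset ℕ) (j : ℕ) : ℝ :=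
  ∑ k ∈ Finset.Icc 1 K,
    if Finset.image (i k) (Finset.Icc 1 E.card) = E ∧ i k (E.card + 1) = j then lam k else 0

/-- Feasibility for the exclusion set formulation (9) given `x`. -/
def Feas9 (K : ℕ) (i : ℕ → ℕ → ℕ) (Lk : ℕ → ℕ) (x : ℕ → ℝ) (z : Finset ℕ → ℝ) : Prop :=
  (∀ E j, IsPair K i Lk E j →
    0 ≤ z (insert j E) - z E ∧ z (insert j E) - z E ≤ x j) ∧
  (∀ E j, IsPair K i Lk E j → x j ≤ z (insert j E)) ∧
  (∀ E, IsExcl K i Lk E → z E ≤ 1) ∧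
  z ∅ = 0

/-- The objective value of the exclusion set formulation (9). -/
noncomputable def ObjZ (K : ℕ) (i : ℕ → ℕ → ℕ) (Lk : ℕ → ℕ) (r lam : ℕ → ℝ)
    (z : Finset ℕ → ℝ) : ℝ :=
  ∑ᶠ (p : Finset ℕ × ℕ) (_ : IsPair K i Lk p.1 p.2),
    r p.2 * lamEI K i lam p.1 p.2 * (z (insert p.2 p.1) - z p.1)
open Finset in
/-- The exclusion set of the `L` most preferred products under ranking `k`. -/
def Ey (i : ℕ → ℕ → ℕ) (k L : ℕ) : Finset ℕ := Finset.image (i k) (Finset.Icc 1 L)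

lemma Ey_zero (i : ℕ → ℕ → ℕ) (k : ℕ) : Ey i k 0 = ∅ := by simp [Ey]

lemma Ey_succ (i : ℕ → ℕ → ℕ) (k L : ℕ) :
    Ey i k (L + 1) = insert (i k (L + 1)) (Ey i k L) := by
  rw [Ey, Ey, show Finset.Icc 1 (L+1) = insert (L+1) (Finset.Icc 1 L) by
    ext a; simp [Finset.mem_Icc, Finset.mem_insert]; omega, Finset.image_insert]

lemma Ey_card {N : ℕ} {i : ℕ → ℕ → ℕ} {k : ℕ}
    (hinj : Set.InjOn (i k) (Set.Icc 1 (N + 1))) {L : ℕ} (hL : L ≤ N + 1) :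
    (Ey i k L).card = L := by
  rw [Ey, Finset.card_image_of_injOn, Nat.card_Icc]
  · omega
  · intro a ha b hb hab
    simp only [Finset.coe_Icc, Set.mem_Icc] at ha hb
    exact hinj ⟨ha.1, ha.2.trans (by omega)⟩ ⟨hb.1, hb.2.trans (by omega)⟩ hab

lemma i_ne_top {N : ℕ} {i : ℕ → ℕ → ℕ} {Lk : ℕ → ℕ} {k : ℕ}
    (hinj : Set.InjOn (i k) (Set.Icc 1 (N + 1)))
    (hLkN : Lk k ≤ N) (hdef : i k (Lk k + 1) = N + 1)
    {ℓ : ℕ} (h1 : 1 ≤ ℓ) (h2 : ℓ ≤ Lk k) : i k ℓ ≠ N + 1 := by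
  intro h
  have : ℓ = Lk k + 1 := hinj (Set.mem_Icc.2 ⟨h1, by omega⟩)
    (Set.mem_Icc.2 ⟨by omega, by omega⟩) (by rw [h, hdef])
  omega

lemma top_not_mem_Ey {N : ℕ} {i : ℕ → ℕ → ℕ} {Lk : ℕ → ℕ} {k : ℕ}
    (hinj : Set.InjOn (i k) (Set.Icc 1 (N + 1)))
    (hLkN : Lk k ≤ N) (hdef : i k (Lk k + 1) = N + 1)
    {L : ℕ} (hL : L ≤ Lk k) : (N + 1) ∉ Ey i k L := by
  rw [Ey, Finset.mem_image]
  rintro ⟨ℓ, hℓ, h⟩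
  rw [Finset.mem_Icc] at hℓ
  exact i_ne_top hinj hLkN hdef hℓ.1 (hℓ.2.trans hL) h

/-- Telescoping sum. -/
lemma telescope (g : ℕ → ℝ) (L : ℕ) :
    ∑ ℓ ∈ Finset.Icc 1 L, (g ℓ - g (ℓ - 1)) = g L - g 0 := by
  induction L with
  | zero => simp
  | succ n ih =>
    rw [Finset.sum_Icc_succ_top (by omega), ih]
    simp
lemma ObjZ_eq (N K : ℕ) (i : ℕ → ℕ → ℕ) (Lk : ℕ → ℕ)
    (hbij : ∀ k, 1 ≤ k → k ≤ K →
      Set.BijOn (i k) (Set.Icc 1 (N + 1)) (Set.Icc 1 (N + 1)))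
    (hLk : ∀ k, 1 ≤ k → k ≤ K → 1 ≤ Lk k ∧ Lk k ≤ N)
    (hLkdef : ∀ k, 1 ≤ k → k ≤ K → i k (Lk k + 1) = N + 1)
    (r lam : ℕ → ℝ) (z : Finset ℕ → ℝ) :
    ObjZ K i Lk r lam z = ∑ k ∈ Finset.Icc 1 K, lam k *
      ∑ ℓ ∈ Finset.Icc 1 (Lk k), r (i k ℓ) * (z (Ey i k ℓ) - z (Ey i k (ℓ - 1))) := by
  classical
  set T : Finset (Finset ℕ × ℕ) :=
    (((Finset.Icc 1 K) ×ˢ (Finset.range N)).image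
      (fun q => (Ey i q.1 q.2, i q.1 (q.2 + 1)))).filter
      (fun p => IsPair K i Lk p.1 p.2) with hT
  have hmemT : ∀ p : Finset ℕ × ℕ, p ∈ T ↔ IsPair K i Lk p.1 p.2 := by
    intro p
    rw [hT, Finset.mem_filter]
    constructor
    · exact fun h => h.2
    · intro hp
      refine ⟨?_, hp⟩
      obtain ⟨k, hk1, hk2, L, hL, hE, hj⟩ := hp
      refine Finset.mem_image.2 ⟨(k, L), ?_, ?_⟩
      · refine Finset.mem_product.2 ⟨Finset.mem_Icc.2 ⟨hk1, hk2⟩, Finset.mem_range.2 ?_⟩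
        have := (hLk k hk1 hk2).2; omega
      · exact Prod.ext hE.symm hj.symm
  have hset : {p : Finset ℕ × ℕ | IsPair K i Lk p.1 p.2} = ↑T := by
    ext p; simp [hmemT p]
  have h1 : ObjZ K i Lk r lam z =
      ∑ p ∈ T, r p.2 * lamEI K i lam p.1 p.2 * (z (insert p.2 p.1) - z p.1) := by
    rw [ObjZ, ← finsum_mem_coe_finset, ← hset]
    rfl
  rw [h1]
  have h2 : ∀ p : Finset ℕ × ℕ,
      r p.2 * lamEI K i lam p.1 p.2 * (z (insert p.2 p.1) - z p.1) =
      ∑ k ∈ Finset.Icc 1 K,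
        if Finset.image (i k) (Finset.Icc 1 p.1.card) = p.1 ∧ i k (p.1.card + 1) = p.2
        then lam k * (r p.2 * (z (insert p.2 p.1) - z p.1)) else 0 := by
    intro p
    rw [lamEI, Finset.mul_sum, Finset.sum_mul]
    refine Finset.sum_congr rfl fun k _ => ?_
    split <;> ring
  rw [Finset.sum_congr rfl fun p _ => h2 p, Finset.sum_comm]
  refine Finset.sum_congr rfl fun k hk => ?_
  rw [Finset.mem_Icc] at hk
  obtain ⟨hk1, hk2⟩ := hk
  have hinj := (hbij k hk1 hk2).injOn
  have hLkN := (hLk k hk1 hk2).2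
  rw [← Finset.sum_filter, Finset.mul_sum]
  -- key facts about elements of the filtered set
  have key : ∀ p ∈ T.filter (fun p : Finset ℕ × ℕ =>
      Finset.image (i k) (Finset.Icc 1 p.1.card) = p.1 ∧ i k (p.1.card + 1) = p.2),
      p.1.card + 1 ≤ Lk k ∧ Finset.image (i k) (Finset.Icc 1 p.1.card) = p.1 ∧
        i k (p.1.card + 1) = p.2 := by
    intro p hp
    rw [Finset.mem_filter] at hp
    obtain ⟨hpT, hc⟩ := hp
    refine ⟨?_, hc⟩
    obtain ⟨k', hk1', hk2', L', hL', hE', hj'⟩ := (hmemT p).1 hpT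
    have hinj' := (hbij k' hk1' hk2').injOn
    have hLkN' := (hLk k' hk1' hk2').2
    have hcard : p.1.card = L' := by
      rw [hE']; exact Ey_card hinj' (by omega)
    have htop : (N + 1) ∉ p.1 := by
      rw [hE']; exact top_not_mem_Ey hinj' hLkN' (hLkdef k' hk1' hk2') (by omega)
    have hjne : p.2 ≠ N + 1 := by
      rw [hj']; exact i_ne_top hinj' hLkN' (hLkdef k' hk1' hk2') (by omega) hL'
    rw [hcard]
    have hLe : L' ≤ Lk k := by
      by_contra hcon
      exact htop (by
        rw [← hc.1, hcard]
        exact Finset.mem_image.2 ⟨Lk k + 1, Finset.mem_Icc.2 ⟨by omega, by omega⟩,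
          hLkdef k hk1 hk2⟩)
    rcases Nat.eq_or_lt_of_le hLe with h' | h'
    · exact absurd (by rw [← hc.2, hcard, h', hLkdef k hk1 hk2] : p.2 = N + 1) hjne
    · omega
  refine Finset.sum_nbij' (fun p => p.1.card + 1) (fun ℓ => (Ey i k (ℓ - 1), i k ℓ))
    ?_ ?_ ?_ ?_ ?_
  · intro p hp
    obtain ⟨hL, _, _⟩ := key p hp
    exact Finset.mem_Icc.2 ⟨Nat.le_add_left 1 _, hL⟩
  · intro ℓ hℓ
    rw [Finset.mem_Icc] at hℓ
    obtain ⟨hℓ1, hℓ2⟩ := hℓ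
    have hcard : (Ey i k (ℓ - 1)).card = ℓ - 1 := Ey_card hinj (by omega)
    rw [Finset.mem_filter]
    constructor
    · exact (hmemT _).2 ⟨k, hk1, hk2, ℓ - 1, by omega, rfl, by rw [show ℓ - 1 + 1 = ℓ by omega]⟩
    · constructor
      · rw [hcard]; rfl
      · rw [hcard, show ℓ - 1 + 1 = ℓ by omega]
  · intro p hp
    obtain ⟨hL, hc1, hc2⟩ := key p hp
    refine Prod.ext ?_ hc2
    show Ey i k (p.1.card + 1 - 1) = p.1
    rw [show p.1.card + 1 - 1 = p.1.card by omega]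
    exact hc1
  · intro ℓ hℓ
    rw [Finset.mem_Icc] at hℓ
    have hcard : (Ey i k (ℓ - 1)).card = ℓ - 1 := Ey_card hinj (by omega)
    show (Ey i k (ℓ - 1), i k ℓ).1.card + 1 = ℓ
    simp only [hcard]
    omega
  · intro p hp
    obtain ⟨hL, hc1, hc2⟩ := key p hp
    have hp1 : p.1 = Ey i k p.1.card := hc1.symm
    rw [← hc2]
    rw [show p.1.card + 1 - 1 = p.1.card by omega]
    congr 2
    rw [Ey_succ, ← hp1]
theorem stmt1
    (N K : ℕ) (hN : 1 ≤ N) (hK : 1 ≤ K)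
    (i : ℕ → ℕ → ℕ)
    (hbij : ∀ k, 1 ≤ k → k ≤ K →
      Set.BijOn (i k) (Set.Icc 1 (N + 1)) (Set.Icc 1 (N + 1)))
    (Lk : ℕ → ℕ)
    (hLk : ∀ k, 1 ≤ k → k ≤ K → 1 ≤ Lk k ∧ Lk k ≤ N)
    (hLkdef : ∀ k, 1 ≤ k → k ≤ K → i k (Lk k + 1) = N + 1)
    (r : ℕ → ℝ) (hrpos : ∀ j, 1 ≤ j → j ≤ N → 0 < r j) (hrN : r (N + 1) = 0)
    (lam : ℕ → ℝ) (hlam : ∀ k, 1 ≤ k → k ≤ K → 0 ≤ lam k)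
    (hlamsum : ∑ k ∈ Finset.Icc 1 K, lam k = 1)
    (x : ℕ → ℝ) (hx : ∀ j, 1 ≤ j → j ≤ N → x j = 0 ∨ x j = 1) :
    {v : ℝ | ∃ y, Feas8 K i Lk x y ∧ ObjY K i Lk r lam y = v} =
    {v : ℝ | ∃ z, Feas9 K i Lk x z ∧ ObjZ K i Lk r lam z = v} := by
  classical
  ext v
  simp only [Set.mem_setOf_eq]
  constructor
  · rintro ⟨y, ⟨heq, hb, hc, hd⟩, rfl⟩
    set z : Finset ℕ → ℝ := fun E =>
      if h : ∃ p : ℕ × ℕ, 1 ≤ p.1 ∧ p.1 ≤ K ∧ p.2 ≤ Lk p.1 ∧ E = Ey i p.1 p.2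
      then ∑ ℓ ∈ Finset.Icc 1 h.choose.2, y h.choose.1 ℓ else 0 with hzdef
    have hz : ∀ k L, 1 ≤ k → k ≤ K → L ≤ Lk k →
        z (Ey i k L) = ∑ ℓ ∈ Finset.Icc 1 L, y k ℓ := by
      intro k L hk1 hk2 hL
      have hex : ∃ p : ℕ × ℕ, 1 ≤ p.1 ∧ p.1 ≤ K ∧ p.2 ≤ Lk p.1 ∧
          Ey i k L = Ey i p.1 p.2 := ⟨(k, L), hk1, hk2, hL, rfl⟩
      rw [hzdef]
      simp only []
      rw [dif_pos hex]
      have hwd : ∀ k' L', 1 ≤ k' → k' ≤ K → L' ≤ Lk k' → Ey i k L = Ey i k' L' →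
          ∑ ℓ ∈ Finset.Icc 1 L', y k' ℓ = ∑ ℓ ∈ Finset.Icc 1 L, y k ℓ := by
        intro k' L' h1' h2' h3' h4'
        have c1 : (Ey i k L).card = L :=
          Ey_card (hbij k hk1 hk2).injOn (by have := (hLk k hk1 hk2).2; omega)
        have c2 : (Ey i k' L').card = L' :=
          Ey_card (hbij k' h1' h2').injOn (by have := (hLk k' h1' h2').2; omega)
        rw [h4'] at c1
        have hLL : L = L' := c1.symm.trans c2
        subst hLL
        rcases Nat.eq_zero_or_pos L with h0 | h0
        · simp [h0]
        · exact heq k' k L h1' h2' hk1 hk2 h0 h3' (h4'.symm : Ey i k' L = Ey i k L)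
      obtain ⟨h1', h2', h3', h4'⟩ := hex.choose_spec
      exact hwd hex.choose.1 hex.choose.2 h1' h2' h3' h4'
    have hd' : ∀ k ℓ, 1 ≤ k → k ≤ K → 1 ≤ ℓ → ℓ ≤ Lk k → 0 ≤ y k ℓ := by
      intro k ℓ a b c d; exact (hd k ℓ a b c d).1
    refine ⟨z, ⟨?_, ?_, ?_, ?_⟩, ?_⟩
    · rintro E j ⟨k, hk1, hk2, L, hL, hE, hj⟩
      have hE' : E = Ey i k L := hE
      have hins : insert j E = Ey i k (L + 1) := by rw [hE', hj, Ey_succ]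
      rw [hins, hE', hz k L hk1 hk2 (by omega), hz k (L + 1) hk1 hk2 hL,
        Finset.sum_Icc_succ_top (by omega)]
      have := hd k (L + 1) hk1 hk2 (by omega) hL
      constructor
      · simpa using this.1
      · rw [hj]; simpa using this.2
    · rintro E j ⟨k, hk1, hk2, L, hL, hE, hj⟩
      have hins : insert j E = Ey i k (L + 1) := by
        rw [show E = Ey i k L from hE, hj, Ey_succ]
      rw [hins, hz k (L + 1) hk1 hk2 hL, hj]
      exact hc k (L + 1) hk1 hk2 (by omega) hL
    · rintro E ⟨k, hk1, hk2, L, hL, hE⟩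
      rw [show E = Ey i k L from hE, hz k L hk1 hk2 hL]
      refine le_trans ?_ (hb k hk1 hk2)
      refine Finset.sum_le_sum_of_subset_of_nonneg
        (Finset.Icc_subset_Icc_right hL) ?_
      intro ℓ hℓ _
      rw [Finset.mem_Icc] at hℓ
      exact hd' k ℓ hk1 hk2 hℓ.1 hℓ.2
    · rw [← Ey_zero i 1, hz 1 0 le_rfl hK (Nat.zero_le _)]
      simp
    · rw [ObjZ_eq N K i Lk hbij hLk hLkdef r lam z, ObjY]
      refine Finset.sum_congr rfl fun k hk => ?_
      rw [Finset.mem_Icc] at hk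
      congr 1
      refine Finset.sum_congr rfl fun ℓ hℓ => ?_
      rw [Finset.mem_Icc] at hℓ
      congr 1
      rw [hz k ℓ hk.1 hk.2 hℓ.2, hz k (ℓ - 1) hk.1 hk.2 (by omega),
        show Finset.Icc 1 ℓ = insert ℓ (Finset.Icc 1 (ℓ - 1)) from by
          ext a; simp only [Finset.mem_Icc, Finset.mem_insert]; omega,
        Finset.sum_insert (by simp only [Finset.mem_Icc]; omega)]
      ring
  · rintro ⟨z, ⟨ha, hbz, hcz, hz0⟩, rfl⟩
    set y : ℕ → ℕ → ℝ := fun k ℓ => z (Ey i k ℓ) - z (Ey i k (ℓ - 1)) with hydef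
    have hsum : ∀ k L, ∑ ℓ ∈ Finset.Icc 1 L, y k ℓ = z (Ey i k L) := by
      intro k L
      rw [hydef]
      exact (telescope (fun n => z (Ey i k n)) L).trans
        (by rw [Ey_zero, hz0, sub_zero])
    have hpair : ∀ k ℓ, 1 ≤ k → k ≤ K → 1 ≤ ℓ → ℓ ≤ Lk k →
        IsPair K i Lk (Ey i k (ℓ - 1)) (i k ℓ) := by
      intro k ℓ hk1 hk2 hℓ1 hℓ2
      exact ⟨k, hk1, hk2, ℓ - 1, by omega, rfl, by rw [show ℓ - 1 + 1 = ℓ by omega]⟩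
    have hins : ∀ k ℓ, 1 ≤ ℓ → insert (i k ℓ) (Ey i k (ℓ - 1)) = Ey i k ℓ := by
      intro k ℓ hℓ
      rw [show ℓ = ℓ - 1 + 1 by omega, Ey_succ, show ℓ - 1 + 1 - 1 = ℓ - 1 by omega]
    refine ⟨y, ⟨?_, ?_, ?_, ?_⟩, ?_⟩
    · intro k k' L hk1 hk2 hk1' hk2' hL1 hL2 himg
      rw [hsum, hsum]
      exact congrArg z (himg : Ey i k L = Ey i k' L)
    · intro k hk1 hk2
      rw [hsum]
      exact hcz _ ⟨k, hk1, hk2, Lk k, le_rfl, rfl⟩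
    · intro k ℓ hk1 hk2 hℓ1 hℓ2
      rw [hsum]
      have := hbz _ _ (hpair k ℓ hk1 hk2 hℓ1 hℓ2)
      rwa [hins k ℓ hℓ1] at this
    · intro k ℓ hk1 hk2 hℓ1 hℓ2
      have := ha _ _ (hpair k ℓ hk1 hk2 hℓ1 hℓ2)
      rw [hins k ℓ hℓ1] at this
      exact this
    · rw [ObjZ_eq N K i Lk hbij hLk hLkdef r lam z, ObjY]
end

section
/- Consider the cardinality constraint Σ_{i=1}^N x(i) ≤ 1 (at most one product besides the no-purchase option is offered). Then the following three suprema of real numbers are equal: (a) sup{Obj(x,y) : x : {1,...,N} → [0,1] with Σ_{i=1}^N x(i) ≤ 1, y feasible for formulation (7) given x}; (b) sup{Obj'(x,z) : x : {1,...,N} → [0,1] with Σ_{i=1}^N x(i) ≤ 1, z feasible for the exclusion set formulation (9) given x}; (c) sup{Obj(x,y) : x : {1,...,N} → {0,1} with Σ_{i=1}^N x(i) ≤ 1, y feasible for formulation (7) given x}. That is, under this cardinality constraint the linear programming relaxations of formulations (7) and (9) are equivalent and both are integral. -/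
namespace Stmt2Aux

/-- set of `L` most preferred products of ranking `k` -/
def topk (i : ℕ → ℕ → ℕ) (k L : ℕ) : Finset ℕ := (Finset.Icc 1 L).image (i k)

structure Ctx (N K : ℕ) (i : ℕ → ℕ → ℕ) (Lk : ℕ → ℕ) : Prop where
  bij : ∀ k, 1 ≤ k → k ≤ K → Set.BijOn (i k) (Set.Icc 1 (N + 1)) (Set.Icc 1 (N + 1))
  Lk1 : ∀ k, 1 ≤ k → k ≤ K → 1 ≤ Lk k
  LkN : ∀ k, 1 ≤ k → k ≤ K → Lk k ≤ N
  Ldef : ∀ k, 1 ≤ k → k ≤ K → i k (Lk k + 1) = N + 1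

variable {N K : ℕ} {i : ℕ → ℕ → ℕ} {Lk : ℕ → ℕ}

lemma Ctx.inj (h : Ctx N K i Lk) {k : ℕ} (h1 : 1 ≤ k) (h2 : k ≤ K) :
    Set.InjOn (i k) (Set.Icc 1 (N + 1)) := (h.bij k h1 h2).injOn

lemma Ctx.range (h : Ctx N K i Lk) {k ℓ : ℕ} (h1 : 1 ≤ k) (h2 : k ≤ K)
    (hl1 : 1 ≤ ℓ) (hl2 : ℓ ≤ Lk k) : 1 ≤ i k ℓ ∧ i k ℓ ≤ N := by
  have hLN := h.LkN k h1 h2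
  have hmem : ℓ ∈ Set.Icc 1 (N + 1) := by constructor <;> omega
  have hm := (h.bij k h1 h2).mapsTo hmem
  refine ⟨hm.1, ?_⟩
  rcases Nat.lt_or_ge (i k ℓ) (N + 1) with hlt | hge
  · omega
  · exfalso
    have hik : i k ℓ = N + 1 := le_antisymm hm.2 hge
    have hL1 : (Lk k + 1) ∈ Set.Icc 1 (N + 1) := ⟨by omega, by omega⟩
    have := h.inj h1 h2 hmem hL1 (by rw [hik, h.Ldef k h1 h2])
    omega

lemma Ctx.card_topk (h : Ctx N K i Lk) {k L : ℕ} (h1 : 1 ≤ k) (h2 : k ≤ K)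
    (hL : L ≤ N + 1) : (topk i k L).card = L := by
  rw [topk, Finset.card_image_of_injOn, Nat.card_Icc]
  · omega
  · intro a ha b hb hab
    rw [Finset.coe_Icc] at ha hb
    exact h.inj h1 h2 ⟨ha.1, le_trans ha.2 hL⟩ ⟨hb.1, le_trans hb.2 hL⟩ hab

lemma Ctx.topk_subset (h : Ctx N K i Lk) {k L : ℕ} (h1 : 1 ≤ k) (h2 : k ≤ K)
    (hL : L ≤ Lk k) : topk i k L ⊆ Finset.Icc 1 N := by
  intro j hj
  rw [topk, Finset.mem_image] at hj
  obtain ⟨ℓ, hℓ, rfl⟩ := hj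
  rw [Finset.mem_Icc] at hℓ ⊢
  exact h.range h1 h2 hℓ.1 (le_trans hℓ.2 hL)

lemma topk_succ (i : ℕ → ℕ → ℕ) (k ℓ : ℕ) (hℓ : 1 ≤ ℓ) :
    topk i k ℓ = insert (i k ℓ) (topk i k (ℓ - 1)) := by
  rw [topk, topk]
  have hIcc : Finset.Icc 1 ℓ = insert ℓ (Finset.Icc 1 (ℓ - 1)) := by
    ext m; simp only [Finset.mem_Icc, Finset.mem_insert]; omega
  rw [hIcc, Finset.image_insert]

/-- sum over the topk set equals sum over positions -/
lemma Ctx.sum_topk (h : Ctx N K i Lk) {k L : ℕ} (h1 : 1 ≤ k) (h2 : k ≤ K)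
    (hL : L ≤ N + 1) (f : ℕ → ℝ) :
    ∑ j ∈ topk i k L, f j = ∑ ℓ ∈ Finset.Icc 1 L, f (i k ℓ) := by
  rw [topk]
  apply Finset.sum_image
  intro a ha b hb hab
  rw [Finset.mem_coe, Finset.mem_Icc] at ha hb
  exact h.inj h1 h2 ⟨ha.1, le_trans ha.2 hL⟩ ⟨hb.1, le_trans hb.2 hL⟩ hab


lemma Ctx.pair_le (h : Ctx N K i Lk) {E : Finset ℕ} {j k : ℕ}
    (hp : IsPair K i Lk E j) (h1 : 1 ≤ k) (h2 : k ≤ K)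
    (hc1 : Finset.image (i k) (Finset.Icc 1 E.card) = E)
    (hc2 : i k (E.card + 1) = j) : E.card + 1 ≤ Lk k := by
  obtain ⟨k', hk'1, hk'2, L, hLlt, hEeq, hjeq⟩ := hp
  have hLN' := h.LkN k' hk'1 hk'2
  have hLN := h.LkN k h1 h2
  have hcard : E.card = L := by
    rw [hEeq]; exact h.card_topk hk'1 hk'2 (by omega)
  have hjN : 1 ≤ j ∧ j ≤ N := by
    rw [hjeq]; exact h.range hk'1 hk'2 (by omega) hLlt
  have hEsub : E ⊆ Finset.Icc 1 N := by
    rw [hEeq]; exact h.topk_subset hk'1 hk'2 (by omega)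
  by_contra hcon
  push_neg at hcon
  have hle : Lk k ≤ E.card := by omega
  rcases eq_or_lt_of_le hle with heq | hlt
  · have : i k (Lk k + 1) = j := by rw [heq]; exact hc2
    rw [h.Ldef k h1 h2] at this
    omega
  · have hmem : N + 1 ∈ E := by
      rw [← hc1, Finset.mem_image]
      exact ⟨Lk k + 1, by rw [Finset.mem_Icc]; omega, h.Ldef k h1 h2⟩
    have := hEsub hmem
    rw [Finset.mem_Icc] at this
    omega

lemma Ctx.reindex (h : Ctx N K i Lk) (lam : ℕ → ℝ) (g : ℕ → Finset ℕ → ℝ)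
    (PF : Finset (Finset ℕ × ℕ)) (hPF : ∀ p, p ∈ PF ↔ IsPair K i Lk p.1 p.2) :
    ∑ p ∈ PF, lamEI K i lam p.1 p.2 * g p.2 p.1 =
    ∑ k ∈ Finset.Icc 1 K, lam k *
      ∑ ℓ ∈ Finset.Icc 1 (Lk k), g (i k ℓ) (topk i k (ℓ - 1)) := by
  have hexp : ∀ p ∈ PF, lamEI K i lam p.1 p.2 * g p.2 p.1 =
      ∑ k ∈ Finset.Icc 1 K,
        (if Finset.image (i k) (Finset.Icc 1 p.1.card) = p.1 ∧ i k (p.1.card + 1) = p.2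
          then lam k * g p.2 p.1 else 0) := by
    intro p _
    rw [lamEI, Finset.sum_mul]
    refine Finset.sum_congr rfl fun k _ => ?_
    split <;> simp
  rw [Finset.sum_congr rfl hexp, Finset.sum_comm]
  refine Finset.sum_congr rfl fun k hk => ?_
  rw [Finset.mem_Icc] at hk
  have hLN := h.LkN k hk.1 hk.2
  rw [Finset.sum_ite, Finset.sum_const_zero, add_zero]
  have himg : PF.filter (fun p => Finset.image (i k) (Finset.Icc 1 p.1.card) = p.1 ∧
        i k (p.1.card + 1) = p.2)
      = (Finset.Icc 1 (Lk k)).image (fun ℓ => (topk i k (ℓ - 1), i k ℓ)) := by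
    ext p
    simp only [Finset.mem_filter, Finset.mem_image, Finset.mem_Icc]
    constructor
    · rintro ⟨hmem, hc1, hc2⟩
      refine ⟨p.1.card + 1, ⟨by omega, h.pair_le ((hPF p).1 hmem) hk.1 hk.2 hc1 hc2⟩, ?_⟩
      have he : p.1.card + 1 - 1 = p.1.card := by omega
      rw [he, hc2]
      rw [show topk i k p.1.card = p.1 from hc1]
    · rintro ⟨ℓ, ⟨hl1, hl2⟩, rfl⟩
      have hcard : (topk i k (ℓ - 1)).card = ℓ - 1 := h.card_topk hk.1 hk.2 (by omega)
      have he : ℓ - 1 + 1 = ℓ := by omega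
      refine ⟨(hPF _).2 ⟨k, hk.1, hk.2, ℓ - 1, by omega, rfl, by rw [he]⟩, ?_, ?_⟩
      · simp only [hcard]; rfl
      · simp only [hcard, he]
  rw [himg, Finset.sum_image, ← Finset.mul_sum]
  intro a ha b hb hab
  rw [Finset.mem_coe, Finset.mem_Icc] at ha hb
  have := congrArg (fun q : Finset ℕ × ℕ => q.1.card) hab
  simp only at this
  rw [h.card_topk hk.1 hk.2 (by omega), h.card_topk hk.1 hk.2 (by omega)] at this
  omega

end Stmt2Aux
theorem stmt2
    (N K : ℕ) (hN : 1 ≤ N) (hK : 1 ≤ K)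
    (i : ℕ → ℕ → ℕ)
    (hbij : ∀ k, 1 ≤ k → k ≤ K →
      Set.BijOn (i k) (Set.Icc 1 (N + 1)) (Set.Icc 1 (N + 1)))
    (Lk : ℕ → ℕ)
    (hLk : ∀ k, 1 ≤ k → k ≤ K → 1 ≤ Lk k ∧ Lk k ≤ N)
    (hLkdef : ∀ k, 1 ≤ k → k ≤ K → i k (Lk k + 1) = N + 1)
    (r : ℕ → ℝ) (hrpos : ∀ j, 1 ≤ j → j ≤ N → 0 < r j) (hrN : r (N + 1) = 0)
    (lam : ℕ → ℝ) (hlam : ∀ k, 1 ≤ k → k ≤ K → 0 ≤ lam k)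
    (hlamsum : ∑ k ∈ Finset.Icc 1 K, lam k = 1) :
    (sSup {v : ℝ | ∃ x y, (∀ j, 1 ≤ j → j ≤ N → 0 ≤ x j ∧ x j ≤ 1) ∧
        (∑ j ∈ Finset.Icc 1 N, x j) ≤ 1 ∧
        Feas7 K i Lk x y ∧ ObjY K i Lk r lam y = v} =
      sSup {v : ℝ | ∃ x z, (∀ j, 1 ≤ j → j ≤ N → 0 ≤ x j ∧ x j ≤ 1) ∧
        (∑ j ∈ Finset.Icc 1 N, x j) ≤ 1 ∧
        Feas9 K i Lk x z ∧ ObjZ K i Lk r lam z = v}) ∧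
    (sSup {v : ℝ | ∃ x z, (∀ j, 1 ≤ j → j ≤ N → 0 ≤ x j ∧ x j ≤ 1) ∧
        (∑ j ∈ Finset.Icc 1 N, x j) ≤ 1 ∧
        Feas9 K i Lk x z ∧ ObjZ K i Lk r lam z = v} =
      sSup {v : ℝ | ∃ x y, (∀ j, 1 ≤ j → j ≤ N → (x j = 0 ∨ x j = 1)) ∧
        (∑ j ∈ Finset.Icc 1 N, x j) ≤ 1 ∧
        Feas7 K i Lk x y ∧ ObjY K i Lk r lam y = v}) := by
  classical
  open Stmt2Aux in
  have hctx : Stmt2Aux.Ctx N K i Lk :=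
    ⟨hbij, fun k h1 h2 => (hLk k h1 h2).1, fun k h1 h2 => (hLk k h1 h2).2, hLkdef⟩
  set c : ℕ → ℝ := fun j =>
    r j * ∑ k ∈ Finset.Icc 1 K, (if j ∈ Stmt2Aux.topk i k (Lk k) then lam k else 0) with hc
  obtain ⟨jstar, hjmem', hjmax⟩ :=
    Finset.exists_max_image (Finset.Icc 1 N) c ⟨1, by rw [Finset.mem_Icc]; omega⟩
  have hjmem : 1 ≤ jstar ∧ jstar ≤ N := Finset.mem_Icc.mp hjmem'
  have hc_nonneg : ∀ j, 1 ≤ j → j ≤ N → 0 ≤ c j := by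
    intro j h1 h2
    rw [hc]
    refine mul_nonneg (hrpos j h1 h2).le (Finset.sum_nonneg fun k hk => ?_)
    rw [Finset.mem_Icc] at hk
    split
    · exact hlam k hk.1 hk.2
    · exact le_refl 0
  have hM0 : 0 ≤ c jstar := hc_nonneg _ hjmem.1 hjmem.2
  -- the "fval" identity
  have hfval : ∀ x : ℕ → ℝ,
      ∑ k ∈ Finset.Icc 1 K, lam k * ∑ ℓ ∈ Finset.Icc 1 (Lk k), r (i k ℓ) * x (i k ℓ)
      = ∑ j ∈ Finset.Icc 1 N, c j * x j := by
    intro x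
    have h1 : ∀ k ∈ Finset.Icc 1 K,
        lam k * ∑ ℓ ∈ Finset.Icc 1 (Lk k), r (i k ℓ) * x (i k ℓ)
        = ∑ j ∈ Finset.Icc 1 N,
            (if j ∈ Stmt2Aux.topk i k (Lk k) then lam k * (r j * x j) else 0) := by
      intro k hk
      rw [Finset.mem_Icc] at hk
      have hLN := (hLk k hk.1 hk.2).2
      rw [← hctx.sum_topk hk.1 hk.2 (by omega) (fun j => r j * x j),
        Finset.sum_ite_mem,
        Finset.inter_eq_right.mpr (hctx.topk_subset hk.1 hk.2 (le_refl _)),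
        Finset.mul_sum]
    rw [Finset.sum_congr rfl h1, Finset.sum_comm]
    refine Finset.sum_congr rfl fun j hj => ?_
    calc ∑ k ∈ Finset.Icc 1 K,
          (if j ∈ Stmt2Aux.topk i k (Lk k) then lam k * (r j * x j) else 0)
        = ∑ k ∈ Finset.Icc 1 K,
          (if j ∈ Stmt2Aux.topk i k (Lk k) then lam k else 0) * (r j * x j) := by
          refine Finset.sum_congr rfl fun k _ => ?_
          rw [ite_mul, zero_mul]
      _ = (∑ k ∈ Finset.Icc 1 K,
          (if j ∈ Stmt2Aux.topk i k (Lk k) then lam k else 0)) * (r j * x j) :=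
          (Finset.sum_mul _ _ _).symm
      _ = c j * x j := by rw [hc]; ring
  -- bound on linear objective
  have hbound : ∀ x : ℕ → ℝ, (∀ j, 1 ≤ j → j ≤ N → 0 ≤ x j ∧ x j ≤ 1) →
      (∑ j ∈ Finset.Icc 1 N, x j) ≤ 1 →
      ∑ j ∈ Finset.Icc 1 N, c j * x j ≤ c jstar := by
    intro x hx hsum
    calc ∑ j ∈ Finset.Icc 1 N, c j * x j
        ≤ ∑ j ∈ Finset.Icc 1 N, c jstar * x j := by
          refine Finset.sum_le_sum fun j hj => ?_
          have hj' := Finset.mem_Icc.mp hj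
          exact mul_le_mul_of_nonneg_right (hjmax j hj) (hx j hj'.1 hj'.2).1
      _ = c jstar * ∑ j ∈ Finset.Icc 1 N, x j := (Finset.mul_sum _ _ _).symm
      _ ≤ c jstar * 1 := mul_le_mul_of_nonneg_left hsum hM0
      _ = c jstar := mul_one _
  -- upper bound for formulation (7)
  have hub7 : ∀ x y, (∀ j, 1 ≤ j → j ≤ N → 0 ≤ x j ∧ x j ≤ 1) →
      (∑ j ∈ Finset.Icc 1 N, x j) ≤ 1 → Feas7 K i Lk x y →
      ObjY K i Lk r lam y ≤ c jstar := by
    intro x y hx hsum hf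
    obtain ⟨hfb, hfc, hfd⟩ := hf
    have hstep : ObjY K i Lk r lam y ≤
        ∑ k ∈ Finset.Icc 1 K, lam k * ∑ ℓ ∈ Finset.Icc 1 (Lk k), r (i k ℓ) * x (i k ℓ) := by
      rw [ObjY]
      refine Finset.sum_le_sum fun k hk => ?_
      rw [Finset.mem_Icc] at hk
      refine mul_le_mul_of_nonneg_left ?_ (hlam k hk.1 hk.2)
      refine Finset.sum_le_sum fun ℓ hℓ => ?_
      rw [Finset.mem_Icc] at hℓ
      have hr := hrpos _ (hctx.range hk.1 hk.2 hℓ.1 hℓ.2).1 (hctx.range hk.1 hk.2 hℓ.1 hℓ.2).2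
      exact mul_le_mul_of_nonneg_left (hfd k ℓ hk.1 hk.2 hℓ.1 hℓ.2).2 hr.le
    exact le_trans hstep (by rw [hfval x]; exact hbound x hx hsum)
  -- the optimal integral solution
  set xstar : ℕ → ℝ := fun j => if j = jstar then 1 else 0 with hxstar
  set ystar : ℕ → ℕ → ℝ := fun k ℓ => xstar (i k ℓ) with hystar
  have hxs_nonneg : ∀ j, 0 ≤ xstar j := by
    intro j; rw [hxstar]; dsimp only; split <;> norm_num
  have hxs_le : ∀ j, xstar j ≤ 1 := by
    intro j; rw [hxstar]; dsimp only; split <;> norm_num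
  have hxs01 : ∀ j, xstar j = 0 ∨ xstar j = 1 := by
    intro j; rw [hxstar]; dsimp only; split
    · right; rfl
    · left; rfl
  have hxsum : ∑ j ∈ Finset.Icc 1 N, xstar j = 1 := by
    rw [hxstar]
    dsimp only
    rw [Finset.sum_ite_eq' (Finset.Icc 1 N) jstar (fun _ => (1:ℝ)), if_pos hjmem']
  have hfeas7 : Feas7 K i Lk xstar ystar := by
    refine ⟨?_, ?_, ?_⟩
    · intro k h1 h2
      have hLN := (hLk k h1 h2).2
      have e1 : ∑ ℓ ∈ Finset.Icc 1 (Lk k), ystar k ℓ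
          = ∑ j ∈ Stmt2Aux.topk i k (Lk k), xstar j :=
        (hctx.sum_topk h1 h2 (by omega) xstar).symm
      rw [e1, hxstar]
      dsimp only
      rw [Finset.sum_ite_eq' (Stmt2Aux.topk i k (Lk k)) jstar (fun _ => (1:ℝ))]
      split <;> norm_num
    · intro k ℓ h1 h2 hl1 hl2
      exact Finset.single_le_sum (f := fun m => ystar k m)
        (fun m _ => hxs_nonneg _) (Finset.mem_Icc.mpr ⟨hl1, le_refl ℓ⟩)
    · intro k ℓ _ _ _ _
      exact ⟨hxs_nonneg _, le_refl _⟩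
  have hObjYeq : ObjY K i Lk r lam ystar = c jstar := by
    rw [ObjY]
    have : ∑ k ∈ Finset.Icc 1 K, lam k * ∑ ℓ ∈ Finset.Icc 1 (Lk k), r (i k ℓ) * ystar k ℓ
        = ∑ k ∈ Finset.Icc 1 K, lam k * ∑ ℓ ∈ Finset.Icc 1 (Lk k), r (i k ℓ) * xstar (i k ℓ) := rfl
    rw [this, hfval xstar]
    have h2 : ∀ j ∈ Finset.Icc 1 N, c j * xstar j = (if j = jstar then c j else 0) := by
      intro j _
      rw [hxstar]; dsimp only
      rw [mul_ite, mul_one, mul_zero]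
    rw [Finset.sum_congr rfl h2, Finset.sum_ite_eq' (Finset.Icc 1 N) jstar c, if_pos hjmem']
  -- finiteness of the pair set
  have hfin : {p : Finset ℕ × ℕ | IsPair K i Lk p.1 p.2}.Finite := by
    apply Set.Finite.subset
      (Set.Finite.image (f := fun q : ℕ × ℕ => ((Finset.Icc 1 q.2).image (i q.1), i q.1 (q.2 + 1)))
        ((Set.finite_Icc 1 K).prod (Set.finite_Icc 0 N)))
    rintro ⟨E, j⟩ ⟨k, hk1, hk2, L, hL, hE, hj⟩
    refine ⟨(k, L), ⟨⟨hk1, hk2⟩, Nat.zero_le _, ?_⟩, ?_⟩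
    · have := (hLk k hk1 hk2).2; omega
    · simp only [Prod.mk.injEq]
      exact ⟨hE.symm, hj.symm⟩
  set PF : Finset (Finset ℕ × ℕ) := hfin.toFinset with hPFdef
  have hPF : ∀ p, p ∈ PF ↔ IsPair K i Lk p.1 p.2 := by
    intro p
    rw [hPFdef, Set.Finite.mem_toFinset]
    exact Iff.rfl
  have hObjZ : ∀ z : Finset ℕ → ℝ, ObjZ K i Lk r lam z =
      ∑ p ∈ PF, r p.2 * lamEI K i lam p.1 p.2 * (z (insert p.2 p.1) - z p.1) := by
    intro z
    rw [ObjZ]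
    have hif : ∀ p : Finset ℕ × ℕ,
        (∑ᶠ _ : IsPair K i Lk p.1 p.2,
          r p.2 * lamEI K i lam p.1 p.2 * (z (insert p.2 p.1) - z p.1))
        = if IsPair K i Lk p.1 p.2 then
            r p.2 * lamEI K i lam p.1 p.2 * (z (insert p.2 p.1) - z p.1) else 0 :=
      fun p => finsum_eq_if
    rw [finsum_congr hif]
    rw [finsum_eq_sum_of_support_subset]
    · exact Finset.sum_congr rfl fun p hp => if_pos ((hPF p).1 hp)
    · intro p hp
      rw [Function.mem_support] at hp
      rw [hPFdef, Set.Finite.coe_toFinset]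
      by_contra hnp
      exact hp (if_neg hnp)
  -- upper bound for formulation (9)
  have hub9 : ∀ x z, (∀ j, 1 ≤ j → j ≤ N → 0 ≤ x j ∧ x j ≤ 1) →
      (∑ j ∈ Finset.Icc 1 N, x j) ≤ 1 → Feas9 K i Lk x z →
      ObjZ K i Lk r lam z ≤ c jstar := by
    intro x z hx hsum hf
    obtain ⟨hfa, hfb, hfc, hfd⟩ := hf
    rw [hObjZ z]
    have hterm : ∀ p ∈ PF, r p.2 * lamEI K i lam p.1 p.2 * (z (insert p.2 p.1) - z p.1)
        = lamEI K i lam p.1 p.2 *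
          (fun jj E => r jj * (z (insert jj E) - z E)) p.2 p.1 := by
      intro p _; dsimp only; ring
    rw [Finset.sum_congr rfl hterm,
      hctx.reindex lam (fun jj E => r jj * (z (insert jj E) - z E)) PF hPF]
    have hstep : ∑ k ∈ Finset.Icc 1 K, lam k *
          ∑ ℓ ∈ Finset.Icc 1 (Lk k),
            r (i k ℓ) * (z (insert (i k ℓ) (Stmt2Aux.topk i k (ℓ - 1)))
              - z (Stmt2Aux.topk i k (ℓ - 1)))
        ≤ ∑ k ∈ Finset.Icc 1 K, lam k *
            ∑ ℓ ∈ Finset.Icc 1 (Lk k), r (i k ℓ) * x (i k ℓ) := by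
      refine Finset.sum_le_sum fun k hk => ?_
      rw [Finset.mem_Icc] at hk
      refine mul_le_mul_of_nonneg_left ?_ (hlam k hk.1 hk.2)
      refine Finset.sum_le_sum fun ℓ hℓ => ?_
      rw [Finset.mem_Icc] at hℓ
      have hpair : IsPair K i Lk (Stmt2Aux.topk i k (ℓ - 1)) (i k ℓ) := by
        refine ⟨k, hk.1, hk.2, ℓ - 1, by omega, rfl, ?_⟩
        rw [show ℓ - 1 + 1 = ℓ by omega]
      have hr := hrpos _ (hctx.range hk.1 hk.2 hℓ.1 hℓ.2).1 (hctx.range hk.1 hk.2 hℓ.1 hℓ.2).2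
      exact mul_le_mul_of_nonneg_left (hfa _ _ hpair).2 hr.le
    exact le_trans hstep (by rw [hfval x]; exact hbound x hx hsum)
  -- the optimal z
  set zstar : Finset ℕ → ℝ := fun E => if jstar ∈ E then 1 else 0 with hzstar
  have hzs01 : ∀ E, zstar E = 0 ∨ zstar E = 1 := by
    intro E; rw [hzstar]; dsimp only; split
    · right; rfl
    · left; rfl
  have hfeas9 : Feas9 K i Lk xstar zstar := by
    refine ⟨?_, ?_, ?_, ?_⟩
    · intro E j _
      rw [hzstar, hxstar]; dsimp only
      by_cases hjE : jstar ∈ E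
      · rw [if_pos hjE, if_pos (Finset.mem_insert_of_mem hjE)]
        constructor
        · norm_num
        · split <;> norm_num
      · rw [if_neg hjE]
        by_cases hj : j = jstar
        · rw [if_pos (by rw [hj]; exact Finset.mem_insert_self _ _), if_pos hj]
          norm_num
        · rw [if_neg (by
            rw [Finset.mem_insert]
            push_neg
            exact ⟨fun hh => hj hh.symm, hjE⟩), if_neg hj]
          norm_num
    · intro E j _
      rw [hzstar, hxstar]; dsimp only
      by_cases hj : j = jstar
      · rw [if_pos hj, if_pos (by rw [hj]; exact Finset.mem_insert_self _ _)]
      · rw [if_neg hj]; split <;> norm_num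
    · intro E _
      rw [hzstar]; dsimp only; split <;> norm_num
    · rw [hzstar]; dsimp only
      rw [if_neg (Finset.notMem_empty jstar)]
  have hObjZeq : ObjZ K i Lk r lam zstar = c jstar := by
    rw [hObjZ zstar]
    have hterm : ∀ p ∈ PF, r p.2 * lamEI K i lam p.1 p.2 * (zstar (insert p.2 p.1) - zstar p.1)
        = lamEI K i lam p.1 p.2 *
          (fun jj E => r jj * (zstar (insert jj E) - zstar E)) p.2 p.1 := by
      intro p _; dsimp only; ring
    rw [Finset.sum_congr rfl hterm,
      hctx.reindex lam (fun jj E => r jj * (zstar (insert jj E) - zstar E)) PF hPF]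
    have hinner : ∀ k ∈ Finset.Icc 1 K,
        lam k * ∑ ℓ ∈ Finset.Icc 1 (Lk k),
          r (i k ℓ) * (zstar (insert (i k ℓ) (Stmt2Aux.topk i k (ℓ - 1)))
            - zstar (Stmt2Aux.topk i k (ℓ - 1)))
        = (if jstar ∈ Stmt2Aux.topk i k (Lk k) then lam k else 0) * r jstar := by
      intro k hk
      rw [Finset.mem_Icc] at hk
      have hLN := (hLk k hk.1 hk.2).2
      have hterm2 : ∀ ℓ ∈ Finset.Icc 1 (Lk k),
          r (i k ℓ) * (zstar (insert (i k ℓ) (Stmt2Aux.topk i k (ℓ - 1)))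
            - zstar (Stmt2Aux.topk i k (ℓ - 1)))
          = (fun j => if j = jstar then r jstar else 0) (i k ℓ) := by
        intro ℓ hℓ
        rw [Finset.mem_Icc] at hℓ
        rw [hzstar]; dsimp only
        by_cases hik : i k ℓ = jstar
        · have h1 : jstar ∈ insert (i k ℓ) (Stmt2Aux.topk i k (ℓ - 1)) := by
            rw [hik]; exact Finset.mem_insert_self _ _
          have h2 : jstar ∉ Stmt2Aux.topk i k (ℓ - 1) := by
            intro hmem
            rw [Stmt2Aux.topk, Finset.mem_image] at hmem
            obtain ⟨ℓ', hℓ', he⟩ := hmem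
            rw [Finset.mem_Icc] at hℓ'
            have : ℓ' = ℓ := hctx.inj hk.1 hk.2 ⟨hℓ'.1, by omega⟩ ⟨by omega, by omega⟩
              (by rw [he, hik])
            omega
          rw [if_pos h1, if_neg h2, if_pos hik, hik]
          ring
        · have hiff : jstar ∈ insert (i k ℓ) (Stmt2Aux.topk i k (ℓ - 1))
              ↔ jstar ∈ Stmt2Aux.topk i k (ℓ - 1) := by
            rw [Finset.mem_insert]
            constructor
            · rintro (hh | hh)
              · exact absurd hh.symm hik
              · exact hh
            · exact Or.inr
          rw [if_congr hiff rfl rfl, if_neg hik]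
          ring
      rw [Finset.sum_congr rfl hterm2,
        ← hctx.sum_topk hk.1 hk.2 (by omega) (fun j => if j = jstar then r jstar else 0),
        Finset.sum_ite_eq' (Stmt2Aux.topk i k (Lk k)) jstar (fun _ => r jstar)]
      split_ifs <;> ring
    rw [Finset.sum_congr rfl hinner, ← Finset.sum_mul, hc]
    dsimp only
    ring
  -- the three suprema
  have hg1 : IsGreatest {v : ℝ | ∃ x y, (∀ j, 1 ≤ j → j ≤ N → 0 ≤ x j ∧ x j ≤ 1) ∧
      (∑ j ∈ Finset.Icc 1 N, x j) ≤ 1 ∧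
      Feas7 K i Lk x y ∧ ObjY K i Lk r lam y = v} (c jstar) := by
    constructor
    · exact ⟨xstar, ystar, fun j h1 h2 => ⟨hxs_nonneg j, hxs_le j⟩, le_of_eq hxsum,
        hfeas7, hObjYeq⟩
    · rintro v ⟨x, y, hx, hsum, hf, rfl⟩
      exact hub7 x y hx hsum hf
  have hg2 : IsGreatest {v : ℝ | ∃ x z, (∀ j, 1 ≤ j → j ≤ N → 0 ≤ x j ∧ x j ≤ 1) ∧
      (∑ j ∈ Finset.Icc 1 N, x j) ≤ 1 ∧
      Feas9 K i Lk x z ∧ ObjZ K i Lk r lam z = v} (c jstar) := by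
    constructor
    · exact ⟨xstar, zstar, fun j h1 h2 => ⟨hxs_nonneg j, hxs_le j⟩, le_of_eq hxsum,
        hfeas9, hObjZeq⟩
    · rintro v ⟨x, z, hx, hsum, hf, rfl⟩
      exact hub9 x z hx hsum hf
  have hg3 : IsGreatest {v : ℝ | ∃ x y, (∀ j, 1 ≤ j → j ≤ N → (x j = 0 ∨ x j = 1)) ∧
      (∑ j ∈ Finset.Icc 1 N, x j) ≤ 1 ∧
      Feas7 K i Lk x y ∧ ObjY K i Lk r lam y = v} (c jstar) := by
    constructor
    · exact ⟨xstar, ystar, fun j _ _ => hxs01 j, le_of_eq hxsum, hfeas7, hObjYeq⟩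
    · rintro v ⟨x, y, hx, hsum, hf, rfl⟩
      refine hub7 x y (fun j h1 h2 => ?_) hsum hf
      rcases hx j h1 h2 with h | h <;> rw [h] <;> norm_num
  rw [hg1.csSup_eq, hg2.csSup_eq, hg3.csSup_eq]
  exact ⟨rfl, rfl⟩
end

section
/- For every δ ∈ Δ there exists (α,β,γ) ∈ D such that J(w,δ) = G(w,(α,β,γ)) for all w ∈ W. -/
open Finset

/-- The maximum revenue `r̄` among the positions `1, …, L+1`. -/
noncomputable def rbar (L : ℕ) (ρ : ℕ → ℝ) : ℝ :=
  (Finset.Icc 1 (L + 1)).sup' (Finset.nonempty_Icc.mpr (by omega)) ρ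

/-- Membership in `Δ = {δ ∈ ℝ^{L+1} : 0 ≤ δ 1 ≤ ⋯ ≤ δ (L+1) ≤ r̄}`. -/
def memDelta (L : ℕ) (ρ δ : ℕ → ℝ) : Prop :=
  0 ≤ δ 1 ∧ (∀ ℓ, 1 ≤ ℓ → ℓ ≤ L → δ ℓ ≤ δ (ℓ + 1)) ∧ δ (L + 1) ≤ rbar L ρ

/-- Membership in `W = {w ∈ ℝ^{N+1} : 0 ≤ w ℓ ≤ 1 for all ℓ, w (L+1) = 1}`. -/
def memW (N L : ℕ) (w : ℕ → ℝ) : Prop :=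
  (∀ ℓ, 1 ≤ ℓ → ℓ ≤ N + 1 → 0 ≤ w ℓ ∧ w ℓ ≤ 1) ∧ w (L + 1) = 1

/-- The objective `J(w, δ)`. -/
noncomputable def Jfun (L : ℕ) (ρ w δ : ℕ → ℝ) : ℝ :=
  δ (L + 1) + ∑ ℓ ∈ Finset.Icc 1 L, (max 0 (ρ ℓ - δ ℓ) - (δ (ℓ + 1) - δ ℓ)) * w ℓ

/-- Membership in the dual feasible set `D`. -/
def memD (N : ℕ) (ρ α β : ℕ → ℝ) (γ : ℝ) : Prop :=
  (∀ ℓ, 1 ≤ ℓ → ℓ ≤ N + 1 → 0 ≤ α ℓ ∧ 0 ≤ β ℓ) ∧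
  (∀ ℓ, 1 ≤ ℓ → ℓ ≤ N + 1 → ρ ℓ ≤ γ + α ℓ - ∑ ℓ' ∈ Finset.Icc ℓ (N + 1), β ℓ')

/-- The objective `G(w, (α, β, γ))`. -/
noncomputable def Gfun (N : ℕ) (w α β : ℕ → ℝ) (γ : ℝ) : ℝ :=
  γ + ∑ ℓ ∈ Finset.Icc 1 (N + 1), (α ℓ - β ℓ) * w ℓ

theorem stmt3
    (N L : ℕ) (hL1 : 1 ≤ L) (hLN : L ≤ N)
    (ρ : ℕ → ℝ)
    (hρpos : ∀ ℓ, 1 ≤ ℓ → ℓ ≤ N + 1 → ℓ ≠ L + 1 → 0 < ρ ℓ)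
    (hρ0 : ρ (L + 1) = 0)
    (δ : ℕ → ℝ) (hδ : memDelta L ρ δ) :
    ∃ α β γ, memD N ρ α β γ ∧
      ∀ w, memW N L w → Jfun L ρ w δ = Gfun N w α β γ := by
  obtain ⟨hδ0, hδmono, hδr⟩ := hδ
  -- monotonicity of δ on [1, L+1]
  have hmono : ∀ a b : ℕ, 1 ≤ a → a ≤ b → b ≤ L + 1 → δ a ≤ δ b := by
    intro a b ha hab hbL
    induction b with
    | zero => omega
    | succ n ih =>
      rcases Nat.lt_or_ge a (n+1) with h | h
      · exact le_trans (ih (by omega) (by omega)) (hδmono n (by omega) (by omega))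
      · have : a = n + 1 := by omega
        subst this; rfl
  have hδL1 : 0 ≤ δ (L + 1) := le_trans hδ0 (hmono 1 (L+1) le_rfl (by omega) le_rfl)
  set γ : ℝ := max (δ (L+1)) ((Finset.Icc 1 (N+1)).sup'
      (Finset.nonempty_Icc.mpr (by omega)) ρ) with hγ
  have hγδ : δ (L+1) ≤ γ := le_max_left _ _
  have hγρ : ∀ ℓ, 1 ≤ ℓ → ℓ ≤ N + 1 → ρ ℓ ≤ γ := by
    intro ℓ h1 h2
    exact le_trans (Finset.le_sup' ρ (Finset.mem_Icc.mpr ⟨h1, h2⟩)) (le_max_right _ _)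
  set α : ℕ → ℝ := fun ℓ => if 1 ≤ ℓ ∧ ℓ ≤ L then max 0 (ρ ℓ - δ ℓ) else 0 with hα
  set β : ℕ → ℝ := fun ℓ => if 1 ≤ ℓ ∧ ℓ ≤ L then δ (ℓ+1) - δ ℓ
      else if ℓ = L + 1 then γ - δ (L+1) else 0 with hβ
  -- telescoping
  have htel : ∀ a b : ℕ, a ≤ b → ∑ i ∈ Finset.Ico a b, (δ (i+1) - δ i) = δ b - δ a := by
    intro a b hab
    induction b, hab using Nat.le_induction with
    | base => simp
    | succ n hn ih =>
      rw [Finset.sum_Ico_succ_top (by omega), ih]; ring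
  -- sum of β over Icc ℓ (N+1) for ℓ ≤ L+1
  have hsumβ : ∀ ℓ : ℕ, 1 ≤ ℓ → ℓ ≤ L + 1 → ∑ ℓ' ∈ Finset.Icc ℓ (N+1), β ℓ' = γ - δ ℓ := by
    intro ℓ h1 h2
    have hsplit : Finset.Icc ℓ (N+1) = Finset.Ico ℓ (L+1) ∪ Finset.Icc (L+1) (N+1) := by
      ext x
      simp only [Finset.mem_Icc, Finset.mem_Ico, Finset.mem_union]
      omega
    have hdisj : Disjoint (Finset.Ico ℓ (L+1)) (Finset.Icc (L+1) (N+1)) := by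
      rw [Finset.disjoint_left]
      intro x hx hx'
      simp only [Finset.mem_Ico] at hx
      simp only [Finset.mem_Icc] at hx'
      omega
    rw [hsplit, Finset.sum_union hdisj]
    have h1' : ∑ ℓ' ∈ Finset.Ico ℓ (L+1), β ℓ' = δ (L+1) - δ ℓ := by
      rw [Finset.sum_congr rfl (fun x hx => ?_), htel ℓ (L+1) h2]
      simp only [Finset.mem_Ico] at hx
      simp only [hβ]
      rw [if_pos ⟨by omega, by omega⟩]
    have h2' : ∑ ℓ' ∈ Finset.Icc (L+1) (N+1), β ℓ' = γ - δ (L+1) := by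
      have : Finset.Icc (L+1) (N+1) = insert (L+1) (Finset.Icc (L+2) (N+1)) := by
        ext x
        simp only [Finset.mem_Icc, Finset.mem_insert]
        omega
      rw [this, Finset.sum_insert (by simp only [Finset.mem_Icc]; omega)]
      have hz : ∑ ℓ' ∈ Finset.Icc (L+2) (N+1), β ℓ' = 0 := by
        apply Finset.sum_eq_zero
        intro x hx
        simp only [Finset.mem_Icc] at hx
        simp only [hβ]
        rw [if_neg (by omega), if_neg (by omega)]
      rw [hz]
      simp only [hβ]
      rw [if_neg (by omega)]
      simp
    rw [h1', h2']; ring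
  refine ⟨α, β, γ, ⟨?_, ?_⟩, ?_⟩
  · -- nonnegativity
    intro ℓ h1 h2
    constructor
    · simp only [hα]
      split
      · exact le_max_left _ _
      · exact le_rfl
    · simp only [hβ]
      split
      · next h => linarith [hδmono ℓ h.1 h.2]
      · split
        · linarith
        · exact le_rfl
  · -- dual constraints
    intro ℓ h1 h2
    rcases Nat.lt_or_ge L ℓ with hgt | hle
    · rcases Nat.lt_or_ge (L+1) ℓ with hgt2 | hle2
      · -- ℓ ≥ L+2
        have hz : ∑ ℓ' ∈ Finset.Icc ℓ (N+1), β ℓ' = 0 := by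
          apply Finset.sum_eq_zero
          intro x hx
          simp only [Finset.mem_Icc] at hx
          simp only [hβ]
          rw [if_neg (by omega), if_neg (by omega)]
        rw [hz]
        simp only [hα]
        rw [if_neg (by omega)]
        have := hγρ ℓ h1 h2
        linarith
      · -- ℓ = L+1
        have hℓ : ℓ = L + 1 := by omega
        subst hℓ
        rw [hsumβ (L+1) (by omega) le_rfl]
        simp only [hα]
        rw [if_neg (by omega), hρ0]
        linarith
    · -- ℓ ≤ L
      rw [hsumβ ℓ h1 (by omega)]
      simp only [hα]
      rw [if_pos ⟨h1, hle⟩]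
      have := le_max_right 0 (ρ ℓ - δ ℓ)
      linarith
  · -- equality of objectives
    intro w ⟨hw, hwL1⟩
    unfold Jfun Gfun
    have hsplit : Finset.Icc 1 (N+1) =
        Finset.Icc 1 L ∪ (insert (L+1) (Finset.Icc (L+2) (N+1))) := by
      ext x
      simp only [Finset.mem_Icc, Finset.mem_union, Finset.mem_insert]
      omega
    have hdisj : Disjoint (Finset.Icc 1 L) (insert (L+1) (Finset.Icc (L+2) (N+1))) := by
      rw [Finset.disjoint_left]
      intro x hx hx'
      simp only [Finset.mem_Icc] at hx
      simp only [Finset.mem_insert, Finset.mem_Icc] at hx'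
      omega
    rw [hsplit, Finset.sum_union hdisj,
        Finset.sum_insert (by simp only [Finset.mem_Icc]; omega)]
    have e1 : ∑ ℓ ∈ Finset.Icc 1 L, (α ℓ - β ℓ) * w ℓ
        = ∑ ℓ ∈ Finset.Icc 1 L, (max 0 (ρ ℓ - δ ℓ) - (δ (ℓ + 1) - δ ℓ)) * w ℓ := by
      apply Finset.sum_congr rfl
      intro x hx
      simp only [Finset.mem_Icc] at hx
      simp only [hα, hβ]
      rw [if_pos ⟨hx.1, hx.2⟩, if_pos ⟨hx.1, hx.2⟩]
    have e2 : (α (L+1) - β (L+1)) * w (L+1) = δ (L+1) - γ := by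
      simp only [hα, hβ, hwL1]
      rw [if_neg (by omega), if_neg (by omega)]
      simp
    have e3 : ∑ ℓ ∈ Finset.Icc (L+2) (N+1), (α ℓ - β ℓ) * w ℓ = 0 := by
      apply Finset.sum_eq_zero
      intro x hx
      simp only [Finset.mem_Icc] at hx
      simp only [hα, hβ]
      rw [if_neg (by omega), if_neg (by omega), if_neg (by omega)]
      ring
    rw [e1, e2, e3]
    ring
end

section
/- Let ŵ ∈ W and suppose δ ∈ Δ satisfies J(ŵ,δ) ≤ J(ŵ,δ'') for every δ'' ∈ Δ (i.e., δ is an optimal solution of minimizing J(ŵ,·) over Δ). Then there exists (α,β,γ) ∈ D such that: (i) G(ŵ,(α,β,γ)) ≤ G(ŵ,(α',β',γ')) for every (α',β',γ') ∈ D (i.e., (α,β,γ) is an optimal solution of minimizing G(ŵ,·) over D); (ii) J(w,δ) = G(w,(α,β,γ)) for all w ∈ W; and (iii) if δ is a Pareto cut in Δ, then (α,β,γ) is a Pareto cut in D. -/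
open Finset

/-- `δ'` dominates `δ` (both thought of as elements of `Δ`). -/
def dominatesDelta (N L : ℕ) (ρ δ' δ : ℕ → ℝ) : Prop :=
  (∀ w, memW N L w → Jfun L ρ w δ' ≤ Jfun L ρ w δ) ∧
  ∃ w, memW N L w ∧ Jfun L ρ w δ' < Jfun L ρ w δ

/-- `δ` is a Pareto cut in `Δ`. -/
def paretoDelta (N L : ℕ) (ρ δ : ℕ → ℝ) : Prop :=
  ¬ ∃ δ', memDelta L ρ δ' ∧ dominatesDelta N L ρ δ' δ

/-- `(α', β', γ')` dominates `(α, β, γ)` (both thought of as elements of `D`). -/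
def dominatesD (N L : ℕ) (α' β' : ℕ → ℝ) (γ' : ℝ) (α β : ℕ → ℝ) (γ : ℝ) : Prop :=
  (∀ w, memW N L w → Gfun N w α' β' γ' ≤ Gfun N w α β γ) ∧
  ∃ w, memW N L w ∧ Gfun N w α' β' γ' < Gfun N w α β γ

/-- `(α, β, γ)` is a Pareto cut in `D`. -/
def paretoD (N L : ℕ) (ρ α β : ℕ → ℝ) (γ : ℝ) : Prop :=
  ¬ ∃ α' β' γ', memD N ρ α' β' γ' ∧ dominatesD N L α' β' γ' α β γ

lemma sum_tele (f : ℕ → ℝ) : ∀ (b a : ℕ), a ≤ b + 1 →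
    ∑ ℓ ∈ Icc a b, (f (ℓ + 1) - f ℓ) = f (b + 1) - f a := by
  intro b
  induction b with
  | zero =>
    intro a ha
    interval_cases a <;> simp
  | succ n ih =>
    intro a ha
    rcases Nat.lt_or_ge a (n + 1) with h' | h'
    · rw [Finset.sum_Icc_succ_top (by omega), ih a (by omega)]; ring
    · rcases Nat.lt_or_ge a (n + 2) with h | h
      · have : a = n + 1 := by omega
        subst this; simp
      · have : a = n + 2 := by omega
        subst this
        rw [Finset.Icc_eq_empty (by omega)]; simp


lemma minmax_step (a b X r : ℝ) (hab : a ≤ b) (hbX : b ≤ X) :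
    min 0 (max a r - X) ≤ min 0 (max a r - b) + min 0 (max b r - X) := by
  simp only [min_def, max_def]
  split_ifs <;> linarith

lemma final_arith (X r : ℝ) (hr : 0 < r) :
    0 ≤ min 0 (r - X) + max 0 (-X) + X - min r (max 0 X) := by
  simp only [min_def, max_def]
  split_ifs <;> linarith

lemma coeff_bound (a b r ρj αj : ℝ) (hab : a ≤ b) (hr : 0 < r) (hρp : 0 < ρj) (hρr : ρj ≤ r)
    (hα0 : 0 ≤ αj) (hα1 : max 0 (ρj - a) ≤ αj) :
    min 0 (max a r - b) ≤
      (αj - (b - a)) - (max 0 (ρj - min r (max 0 a)) - (min r (max 0 b) - min r (max 0 a))) := by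
  simp only [min_def, max_def] at hα1 ⊢
  split_ifs at hα1 ⊢ <;> linarith

lemma dual_to_delta (N L : ℕ) (hL1 : 1 ≤ L) (hLN : L ≤ N) (ρ : ℕ → ℝ)
    (hρpos : ∀ ℓ, 1 ≤ ℓ → ℓ ≤ N + 1 → ℓ ≠ L + 1 → 0 < ρ ℓ)
    (hρ0 : ρ (L + 1) = 0)
    (α' β' : ℕ → ℝ) (γ' : ℝ) (hD : memD N ρ α' β' γ') :
    ∃ δ'', memDelta L ρ δ'' ∧ ∀ w, memW N L w → Jfun L ρ w δ'' ≤ Gfun N w α' β' γ' := by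
  have hr : 0 < rbar L ρ := by
    refine lt_of_lt_of_le (hρpos 1 le_rfl (by omega) (by omega)) ?_
    exact Finset.le_sup' ρ (Finset.mem_Icc.mpr (by omega))
  have hρler : ∀ ℓ, 1 ≤ ℓ → ℓ ≤ L + 1 → ρ ℓ ≤ rbar L ρ := by
    intro ℓ h1 h2
    exact Finset.le_sup' ρ (Finset.mem_Icc.mpr (by omega))
  set s : ℕ → ℝ := fun ℓ => γ' - ∑ ℓ' ∈ Icc ℓ (N + 1), β' ℓ' with hs_def
  have hstep : ∀ ℓ, ℓ ≤ N + 1 → s (ℓ + 1) = s ℓ + β' ℓ := by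
    intro ℓ hℓ
    have hins : Icc ℓ (N + 1) = insert ℓ (Icc (ℓ + 1) (N + 1)) := by
      ext x; simp only [Finset.mem_Icc, Finset.mem_insert]; omega
    have h2 : ∑ ℓ' ∈ Icc ℓ (N + 1), β' ℓ' = β' ℓ + ∑ ℓ' ∈ Icc (ℓ + 1) (N + 1), β' ℓ' := by
      rw [hins, Finset.sum_insert (by simp)]
    show γ' - ∑ ℓ' ∈ Icc (ℓ + 1) (N + 1), β' ℓ' = (γ' - ∑ ℓ' ∈ Icc ℓ (N + 1), β' ℓ') + β' ℓ
    rw [h2]; ring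
  have hβ0 : ∀ ℓ, 1 ≤ ℓ → ℓ ≤ N + 1 → 0 ≤ β' ℓ := fun ℓ h1 h2 => (hD.1 ℓ h1 h2).2
  have hmono_s : ∀ b, b ≤ N + 2 → ∀ a, 1 ≤ a → a ≤ b → s a ≤ s b := by
    intro b
    induction b with
    | zero => intro _ a h1 h2; omega
    | succ n ih =>
      intro hn a h1 h2
      rcases Nat.lt_or_ge a (n + 1) with h | h
      · have h3 : s a ≤ s n := ih (by omega) a h1 (by omega)
        have h4 : s (n + 1) = s n + β' n := hstep n (by omega)
        have h5 := hβ0 n (by omega) (by omega)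
        linarith
      · have : a = n + 1 := by omega
        simp [this]
  have hconstr : ∀ ℓ, 1 ≤ ℓ → ℓ ≤ N + 1 → ρ ℓ ≤ α' ℓ + s ℓ := by
    intro ℓ h1 h2
    have := hD.2 ℓ h1 h2
    simp only [hs_def]
    linarith
  set δ'' : ℕ → ℝ := fun ℓ => min (rbar L ρ) (max 0 (s ℓ)) with hd_def
  have hdmem : memDelta L ρ δ'' := by
    refine ⟨le_min hr.le (le_max_left _ _), ?_, min_le_left _ _⟩
    intro ℓ h1 h2
    exact min_le_min le_rfl (max_le_max le_rfl (hmono_s (ℓ + 1) (by omega) ℓ h1 (by omega)))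
  refine ⟨δ'', hdmem, ?_⟩
  intro w hw
  obtain ⟨hwb, hwL1⟩ := hw
  -- per-term bound
  have KT : ∀ j, 1 ≤ j → j ≤ L →
      min 0 (max (s j) (rbar L ρ) - s (j + 1)) ≤
        (α' j - β' j) * w j - (max 0 (ρ j - δ'' j) - (δ'' (j + 1) - δ'' j)) * w j := by
    intro j h1 h2
    have hβeq : β' j = s (j + 1) - s j := by have := hstep j (by omega); linarith
    have hα1 : max 0 (ρ j - s j) ≤ α' j := by
      have h := hconstr j h1 (by omega)
      have h0 := (hD.1 j h1 (by omega)).1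
      exact max_le h0 (by linarith)
    have hρr := hρler j h1 (by omega)
    have hρp := hρpos j h1 (by omega) (by omega)
    have hwj := hwb j h1 (by omega)
    have hab : s j ≤ s (j + 1) := hmono_s (j + 1) (by omega) j h1 (by omega)
    have hα0 : 0 ≤ α' j := (hD.1 j h1 (by omega)).1
    have hc : min 0 (max (s j) (rbar L ρ) - s (j + 1)) ≤
        (α' j - β' j) - (max 0 (ρ j - δ'' j) - (δ'' (j + 1) - δ'' j)) := by
      have hcb := coeff_bound (s j) (s (j + 1)) (rbar L ρ) (ρ j) (α' j) hab hr hρp hρr hα0 hα1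
      simp only [hd_def]
      rw [hβeq]
      convert hcb using 2
    rcases le_or_gt 0 ((α' j - β' j) - (max 0 (ρ j - δ'' j) - (δ'' (j + 1) - δ'' j))) with h | h
    · have h6 : 0 ≤ ((α' j - β' j) - (max 0 (ρ j - δ'' j) - (δ'' (j + 1) - δ'' j))) * w j :=
        mul_nonneg h hwj.1
      have h7 : min 0 (max (s j) (rbar L ρ) - s (j + 1)) ≤ 0 := min_le_left _ _
      nlinarith
    · have h6 : ((α' j - β' j) - (max 0 (ρ j - δ'' j) - (δ'' (j + 1) - δ'' j))) * w j ≥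
          ((α' j - β' j) - (max 0 (ρ j - δ'' j) - (δ'' (j + 1) - δ'' j))) := by
        nlinarith [mul_nonneg (neg_nonneg.mpr h.le) (sub_nonneg.mpr hwj.2)]
      nlinarith
  -- induction
  have aux : ∀ n j, 1 ≤ j → j + n = L + 1 →
      min 0 (max (s j) (rbar L ρ) - s (L + 1)) ≤
        ∑ ℓ ∈ Icc j L, ((α' ℓ - β' ℓ) * w ℓ -
          (max 0 (ρ ℓ - δ'' ℓ) - (δ'' (ℓ + 1) - δ'' ℓ)) * w ℓ) := by
    intro n
    induction n with
    | zero =>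
      intro j h1 h2
      have hj : j = L + 1 := by omega
      subst hj
      rw [Finset.Icc_eq_empty (by omega)]
      simp only [Finset.sum_empty]
      have : (0:ℝ) ≤ max (s (L + 1)) (rbar L ρ) - s (L + 1) := by
        have := le_max_left (s (L + 1)) (rbar L ρ); linarith
      exact min_le_left _ _
    | succ n ih =>
      intro j h1 h2
      have hjL : j ≤ L := by omega
      have hins : Icc j L = insert j (Icc (j + 1) L) := by
        ext x; simp [Finset.mem_Icc, Finset.mem_insert]; omega
      rw [hins, Finset.sum_insert (by simp)]
      have h3 := ih (j + 1) (by omega) (by omega)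
      have h4 := KT j h1 hjL
      have h5 := minmax_step (s j) (s (j + 1)) (s (L + 1)) (rbar L ρ)
        (hmono_s (j + 1) (by omega) j h1 (by omega))
        (hmono_s (L + 1) (by omega) (j + 1) (by omega) (by omega))
      linarith
  have hQ := aux L 1 le_rfl (by omega)
  rw [Finset.sum_sub_distrib] at hQ
  have hQ' : min 0 (rbar L ρ - s (L + 1)) ≤
      ∑ ℓ ∈ Icc 1 L, (α' ℓ - β' ℓ) * w ℓ -
        ∑ ℓ ∈ Icc 1 L, (max 0 (ρ ℓ - δ'' ℓ) - (δ'' (ℓ + 1) - δ'' ℓ)) * w ℓ := by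
    refine le_trans (min_le_min le_rfl ?_) hQ
    have := le_max_right (s 1) (rbar L ρ); linarith
  -- split the G sum
  have hdisj : Disjoint (Icc 1 L) (Icc (L + 1) (N + 1)) := by
    rw [Finset.disjoint_left]; intro x hx hx'
    simp [Finset.mem_Icc] at hx hx'; omega
  have hsplit : ∑ ℓ ∈ Icc 1 (N + 1), (α' ℓ - β' ℓ) * w ℓ =
      ∑ ℓ ∈ Icc 1 L, (α' ℓ - β' ℓ) * w ℓ + (α' (L + 1) - β' (L + 1)) +
        ∑ ℓ ∈ Icc (L + 2) (N + 1), (α' ℓ - β' ℓ) * w ℓ := by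
    rw [show Icc 1 (N + 1) = Icc 1 L ∪ Icc (L + 1) (N + 1) from by
        ext x; simp [Finset.mem_Icc, Finset.mem_union]; omega,
      Finset.sum_union hdisj,
      show Icc (L + 1) (N + 1) = insert (L + 1) (Icc (L + 2) (N + 1)) from by
        ext x; simp [Finset.mem_Icc, Finset.mem_insert]; omega,
      Finset.sum_insert (by simp), hwL1, mul_one]
    ring
  have htail : s (L + 2) - γ' ≤ ∑ ℓ ∈ Icc (L + 2) (N + 1), (α' ℓ - β' ℓ) * w ℓ := by
    have h1 : ∀ ℓ ∈ Icc (L + 2) (N + 1), -β' ℓ ≤ (α' ℓ - β' ℓ) * w ℓ := by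
      intro ℓ hℓ
      simp only [Finset.mem_Icc] at hℓ
      have hα := (hD.1 ℓ (by omega) (by omega)).1
      have hβ := (hD.1 ℓ (by omega) (by omega)).2
      have hwℓ := hwb ℓ (by omega) (by omega)
      nlinarith [mul_nonneg hα hwℓ.1, mul_nonneg hβ (by linarith [hwℓ.2] : (0:ℝ) ≤ 1 - w ℓ)]
    have h2 := Finset.sum_le_sum h1
    rw [Finset.sum_neg_distrib] at h2
    have h3 : s (L + 2) = γ' - ∑ ℓ ∈ Icc (L + 2) (N + 1), β' ℓ := by simp only [hs_def]
    linarith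
  have hαL1 : max 0 (-s (L + 1)) ≤ α' (L + 1) := by
    have h := hconstr (L + 1) (by omega) (by omega)
    have h0 := (hD.1 (L + 1) (by omega) (by omega)).1
    rw [hρ0] at h
    exact max_le h0 (by linarith)
  have hβL1 : β' (L + 1) = s (L + 2) - s (L + 1) := by
    have := hstep (L + 1) (by omega); linarith
  have hdL1 : δ'' (L + 1) = min (rbar L ρ) (max 0 (s (L + 1))) := by simp only [hd_def]
  have hfin := final_arith (s (L + 1)) (rbar L ρ) hr
  simp only [Jfun, Gfun]
  linarith [hQ', htail, hαL1, hfin, hsplit, hβL1, hdL1]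

theorem stmt5
    (N L : ℕ) (hL1 : 1 ≤ L) (hLN : L ≤ N)
    (ρ : ℕ → ℝ)
    (hρpos : ∀ ℓ, 1 ≤ ℓ → ℓ ≤ N + 1 → ℓ ≠ L + 1 → 0 < ρ ℓ)
    (hρ0 : ρ (L + 1) = 0)
    (w₀ : ℕ → ℝ) (hw₀ : memW N L w₀)
    (δ : ℕ → ℝ) (hδ : memDelta L ρ δ)
    (hopt : ∀ δ'', memDelta L ρ δ'' → Jfun L ρ w₀ δ ≤ Jfun L ρ w₀ δ'') :
    ∃ α β γ, memD N ρ α β γ ∧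
      (∀ α' β' γ', memD N ρ α' β' γ' → Gfun N w₀ α β γ ≤ Gfun N w₀ α' β' γ') ∧
      (∀ w, memW N L w → Jfun L ρ w δ = Gfun N w α β γ) ∧
      (paretoDelta N L ρ δ → paretoD N L ρ α β γ) := by
  obtain ⟨hδ0, hδmono, hδtop⟩ := hδ
  set K : ℝ := ∑ ℓ ∈ Icc (L + 2) (N + 1), max 0 (ρ ℓ) with hK_def
  have hK : 0 ≤ K := Finset.sum_nonneg (fun ℓ _ => le_max_left _ _)
  have hδchain : ∀ b, 1 ≤ b → b ≤ L + 1 → 0 ≤ δ b := by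
    intro b
    induction b with
    | zero => omega
    | succ n ih =>
      intro h1 h2
      rcases Nat.lt_or_ge 1 (n + 1) with h | h
      · have := hδmono n (by omega) (by omega)
        have := ih (by omega) (by omega)
        linarith
      · have : n + 1 = 1 := by omega
        rw [this]; exact hδ0
  have hδL1 : 0 ≤ δ (L + 1) := hδchain (L + 1) (by omega) le_rfl
  set α : ℕ → ℝ := fun ℓ => if 1 ≤ ℓ ∧ ℓ ≤ L then max 0 (ρ ℓ - δ ℓ) else 0 with hα_def
  set β : ℕ → ℝ := fun ℓ => if 1 ≤ ℓ ∧ ℓ ≤ L then δ (ℓ + 1) - δ ℓ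
    else if ℓ = L + 1 then K else 0 with hβ_def
  -- sums of β
  have hsum_hi : ∀ ℓ, L + 2 ≤ ℓ → ∑ ℓ' ∈ Icc ℓ (N + 1), β ℓ' = 0 := by
    intro ℓ hℓ
    refine Finset.sum_eq_zero ?_
    intro x hx
    simp only [Finset.mem_Icc] at hx
    simp only [hβ_def]
    rw [if_neg (by omega), if_neg (by omega)]
  have hsum_L1 : ∑ ℓ' ∈ Icc (L + 1) (N + 1), β ℓ' = K := by
    rw [show Icc (L + 1) (N + 1) = insert (L + 1) (Icc (L + 2) (N + 1)) from by
      ext x; simp only [Finset.mem_Icc, Finset.mem_insert]; omega,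
      Finset.sum_insert (by simp), hsum_hi (L + 2) le_rfl]
    simp only [hβ_def]
    rw [if_neg (by omega), if_pos trivial]
    ring
  have hsum_lo : ∀ ℓ, 1 ≤ ℓ → ℓ ≤ L → ∑ ℓ' ∈ Icc ℓ (N + 1), β ℓ' = δ (L + 1) - δ ℓ + K := by
    intro ℓ h1 h2
    have hdisj : Disjoint (Icc ℓ L) (Icc (L + 1) (N + 1)) := by
      rw [Finset.disjoint_left]; intro x hx hx'
      simp only [Finset.mem_Icc] at hx hx'; omega
    rw [show Icc ℓ (N + 1) = Icc ℓ L ∪ Icc (L + 1) (N + 1) from by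
      ext x; simp only [Finset.mem_Icc, Finset.mem_union]; omega,
      Finset.sum_union hdisj, hsum_L1]
    have : ∑ ℓ' ∈ Icc ℓ L, β ℓ' = ∑ ℓ' ∈ Icc ℓ L, (δ (ℓ' + 1) - δ ℓ') := by
      refine Finset.sum_congr rfl ?_
      intro x hx
      simp only [Finset.mem_Icc] at hx
      simp only [hβ_def]
      rw [if_pos (by omega)]
    rw [this, sum_tele δ L ℓ (by omega)]
  have hmemD : memD N ρ α β (δ (L + 1) + K) := by
    constructor
    · intro ℓ h1 h2
      constructor
      · simp only [hα_def]; split_ifs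
        · exact le_max_left _ _
        · exact le_rfl
      · simp only [hβ_def]; split_ifs with hc1 hc2
        · have := hδmono ℓ hc1.1 hc1.2; linarith
        · exact hK
        · exact le_rfl
    · intro ℓ h1 h2
      rcases Nat.lt_or_ge L ℓ with h | h
      · rcases Nat.lt_or_ge (L + 1) ℓ with h' | h'
        · rw [hsum_hi ℓ (by omega)]
          have hα0 : α ℓ = 0 := by simp only [hα_def]; rw [if_neg (by omega)]
          have hρK : ρ ℓ ≤ K := by
            have h5 : max 0 (ρ ℓ) ≤ K := by
              refine Finset.single_le_sum (f := fun x => max 0 (ρ x)) ?_ ?_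
              · intro x _; exact le_max_left _ _
              · simp only [Finset.mem_Icc]; omega
            have := le_max_right 0 (ρ ℓ); linarith
          rw [hα0]; linarith
        · have hℓ : ℓ = L + 1 := by omega
          subst hℓ
          rw [hsum_L1, hρ0]
          have hα0 : α (L + 1) = 0 := by simp only [hα_def]; rw [if_neg (by omega)]
          rw [hα0]; linarith
      · rw [hsum_lo ℓ h1 h]
        have hαℓ : α ℓ = max 0 (ρ ℓ - δ ℓ) := by simp only [hα_def]; rw [if_pos (by omega)]
        rw [hαℓ]
        have := le_max_right 0 (ρ ℓ - δ ℓ)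
        linarith
  have hJG : ∀ w, memW N L w → Jfun L ρ w δ = Gfun N w α β (δ (L + 1) + K) := by
    intro w hw
    obtain ⟨hwb, hwL1⟩ := hw
    have hdisj : Disjoint (Icc 1 L) (Icc (L + 1) (N + 1)) := by
      rw [Finset.disjoint_left]; intro x hx hx'
      simp only [Finset.mem_Icc] at hx hx'; omega
    simp only [Jfun, Gfun]
    rw [show Icc 1 (N + 1) = Icc 1 L ∪ Icc (L + 1) (N + 1) from by
      ext x; simp only [Finset.mem_Icc, Finset.mem_union]; omega,
      Finset.sum_union hdisj,
      show Icc (L + 1) (N + 1) = insert (L + 1) (Icc (L + 2) (N + 1)) from by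
        ext x; simp only [Finset.mem_Icc, Finset.mem_insert]; omega,
      Finset.sum_insert (by simp)]
    have e1 : ∑ ℓ ∈ Icc 1 L, (α ℓ - β ℓ) * w ℓ =
        ∑ ℓ ∈ Icc 1 L, (max 0 (ρ ℓ - δ ℓ) - (δ (ℓ + 1) - δ ℓ)) * w ℓ := by
      refine Finset.sum_congr rfl ?_
      intro x hx
      simp only [Finset.mem_Icc] at hx
      simp only [hα_def, hβ_def]
      rw [if_pos (by omega), if_pos (by omega)]
    have e2 : (α (L + 1) - β (L + 1)) * w (L + 1) = -K := by
      simp only [hα_def, hβ_def]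
      rw [if_neg (by omega), if_neg (by omega), if_pos trivial, hwL1]
      ring
    have e3 : ∑ ℓ ∈ Icc (L + 2) (N + 1), (α ℓ - β ℓ) * w ℓ = 0 := by
      refine Finset.sum_eq_zero ?_
      intro x hx
      simp only [Finset.mem_Icc] at hx
      simp only [hα_def, hβ_def]
      rw [if_neg (by omega), if_neg (by omega), if_neg (by omega)]
      ring
    rw [e1, e2, e3]
    ring
  refine ⟨α, β, δ (L + 1) + K, hmemD, ?_, hJG, ?_⟩
  · intro α' β' γ' hD'
    obtain ⟨δ'', hδ''Δ, hδ''le⟩ := dual_to_delta N L hL1 hLN ρ hρpos hρ0 α' β' γ' hD'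
    calc Gfun N w₀ α β (δ (L + 1) + K) = Jfun L ρ w₀ δ := (hJG w₀ hw₀).symm
      _ ≤ Jfun L ρ w₀ δ'' := hopt δ'' hδ''Δ
      _ ≤ Gfun N w₀ α' β' γ' := hδ''le w₀ hw₀
  · intro hP hcon
    obtain ⟨α', β', γ', hD', hdom⟩ := hcon
    obtain ⟨δ'', hδ''Δ, hδ''le⟩ := dual_to_delta N L hL1 hLN ρ hρpos hρ0 α' β' γ' hD'
    refine hP ⟨δ'', hδ''Δ, ?_, ?_⟩
    · intro w hw
      calc Jfun L ρ w δ'' ≤ Gfun N w α' β' γ' := hδ''le w hw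
        _ ≤ Gfun N w α β (δ (L + 1) + K) := hdom.1 w hw
        _ = Jfun L ρ w δ := (hJG w hw).symm
    · obtain ⟨wb, hwbW, hwblt⟩ := hdom.2
      refine ⟨wb, hwbW, ?_⟩
      calc Jfun L ρ wb δ'' ≤ Gfun N wb α' β' γ' := hδ''le wb hwbW
        _ < Gfun N wb α β (δ (L + 1) + K) := hwblt
        _ = Jfun L ρ wb δ := (hJG wb hwbW).symm
end

section
/- Let δ ∈ Δ, let r̄* := max_{1≤ℓ≤N+1} ρ(ℓ), and define α, β ∈ ℝ^{N+1} and γ ∈ ℝ by: α(ℓ) := max{0, ρ(ℓ) − δ(ℓ)} for ℓ ∈ {1,...,L+1} and α(ℓ) := 0 for ℓ ∈ {L+2,...,N+1}; β(ℓ) := δ(ℓ+1) − δ(ℓ) for ℓ ∈ {1,...,L}, β(L+1) := r̄* − δ(L+1), and β(ℓ) := 0 for ℓ ∈ {L+2,...,N+1}; and γ := r̄*. Then (α,β,γ) ∈ D and J(w,δ) = G(w,(α,β,γ)) for all w ∈ W. -/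
open Finset

/-- The maximum revenue `r̄*` among all positions `1, …, N+1`. -/
noncomputable def rmax (N : ℕ) (ρ : ℕ → ℝ) : ℝ :=
  (Finset.Icc 1 (N + 1)).sup' (Finset.nonempty_Icc.mpr (by omega)) ρ

lemma tele (f : ℕ → ℝ) : ∀ (b a : ℕ), a ≤ b + 1 →
    ∑ i ∈ Finset.Icc a b, (f (i+1) - f i) = f (b+1) - f a := by
  intro b
  induction b with
  | zero => intro a h; interval_cases a <;> simp
  | succ n ih =>
    intro a h
    by_cases ha : a ≤ n + 1
    · rw [Finset.sum_Icc_succ_top ha, ih a ha]; ring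
    · have : a = n + 2 := by omega
      subst this
      rw [Finset.Icc_eq_empty (by omega)]
      simp

theorem stmt6
    (N L : ℕ) (hL1 : 1 ≤ L) (hLN : L ≤ N)
    (ρ : ℕ → ℝ)
    (hρpos : ∀ ℓ, 1 ≤ ℓ → ℓ ≤ N + 1 → ℓ ≠ L + 1 → 0 < ρ ℓ)
    (hρ0 : ρ (L + 1) = 0)
    (δ : ℕ → ℝ) (hδ : memDelta L ρ δ)
    (α β : ℕ → ℝ) (γ : ℝ)
    (hα1 : ∀ ℓ, 1 ≤ ℓ → ℓ ≤ L + 1 → α ℓ = max 0 (ρ ℓ - δ ℓ))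
    (hα2 : ∀ ℓ, L + 2 ≤ ℓ → ℓ ≤ N + 1 → α ℓ = 0)
    (hβ1 : ∀ ℓ, 1 ≤ ℓ → ℓ ≤ L → β ℓ = δ (ℓ + 1) - δ ℓ)
    (hβ2 : β (L + 1) = rmax N ρ - δ (L + 1))
    (hβ3 : ∀ ℓ, L + 2 ≤ ℓ → ℓ ≤ N + 1 → β ℓ = 0)
    (hγ : γ = rmax N ρ) :
    memD N ρ α β γ ∧ ∀ w, memW N L w → Jfun L ρ w δ = Gfun N w α β γ := by
  have hmono := hδ.2.1
  have hrr : rbar L ρ ≤ rmax N ρ :=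
    Finset.sup'_mono ρ (Finset.Icc_subset_Icc_right (by omega)) _
  -- telescoping of β over Icc ℓ (N+1) for 1 ≤ ℓ ≤ L+1
  have hsumβ : ∀ ℓ, 1 ≤ ℓ → ℓ ≤ L + 1 →
      ∑ ℓ' ∈ Finset.Icc ℓ (N + 1), β ℓ' = rmax N ρ - δ ℓ := by
    intro ℓ h1 h2
    have hsub : ∑ ℓ' ∈ Finset.Icc ℓ (N + 1), β ℓ'
        = ∑ ℓ' ∈ Finset.Icc ℓ (L + 1), β ℓ' := by
      refine (Finset.sum_subset (Finset.Icc_subset_Icc_right (by omega)) ?_).symm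
      intro x hx hx2
      simp only [Finset.mem_Icc] at hx hx2
      exact hβ3 x (by omega) hx.2
    rw [hsub, Finset.sum_Icc_succ_top h2, hβ2]
    have : ∑ ℓ' ∈ Finset.Icc ℓ L, β ℓ'
        = ∑ ℓ' ∈ Finset.Icc ℓ L, (δ (ℓ' + 1) - δ ℓ') := by
      refine Finset.sum_congr rfl ?_
      intro x hx
      simp only [Finset.mem_Icc] at hx
      exact hβ1 x (by omega) hx.2
    rw [this, tele δ L ℓ (by omega)]
    ring
  have hδL1 : 0 ≤ δ (L + 1) := by
    have h0 : δ (L + 1) - δ 1 = ∑ i ∈ Finset.Icc 1 L, (δ (i+1) - δ i) :=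
      (tele δ L 1 (by omega)).symm
    have hnn : 0 ≤ ∑ i ∈ Finset.Icc 1 L, (δ (i+1) - δ i) := by
      refine Finset.sum_nonneg ?_
      intro i hi
      simp only [Finset.mem_Icc] at hi
      linarith [hmono i hi.1 hi.2]
    linarith [hδ.1]
  have hαL1 : α (L + 1) = 0 := by
    rw [hα1 (L+1) (by omega) le_rfl, hρ0]
    simp [max_eq_left]; linarith
  constructor
  · constructor
    · intro ℓ h1 h2
      constructor
      · by_cases h : ℓ ≤ L + 1
        · rw [hα1 ℓ h1 h]; exact le_max_left _ _
        · rw [hα2 ℓ (by omega) h2]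
      · by_cases h : ℓ ≤ L
        · rw [hβ1 ℓ h1 h]; linarith [hmono ℓ h1 h]
        · by_cases h' : ℓ = L + 1
          · subst h'; rw [hβ2]; linarith [hδ.2.2]
          · rw [hβ3 ℓ (by omega) h2]
    · intro ℓ h1 h2
      by_cases h : ℓ ≤ L + 1
      · rw [hsumβ ℓ h1 h, hα1 ℓ h1 h, hγ]
        have := le_max_right 0 (ρ ℓ - δ ℓ)
        linarith
      · have hs : ∑ ℓ' ∈ Finset.Icc ℓ (N + 1), β ℓ' = 0 := by
          refine Finset.sum_eq_zero ?_
          intro x hx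
          simp only [Finset.mem_Icc] at hx
          exact hβ3 x (by omega) hx.2
        rw [hs, hα2 ℓ (by omega) h2, hγ]
        have : ρ ℓ ≤ rmax N ρ :=
          Finset.le_sup' ρ (Finset.mem_Icc.mpr ⟨h1, h2⟩)
        linarith
  · intro w hw
    have hsub : ∑ ℓ ∈ Finset.Icc 1 (N + 1), (α ℓ - β ℓ) * w ℓ
        = ∑ ℓ ∈ Finset.Icc 1 (L + 1), (α ℓ - β ℓ) * w ℓ := by
      refine (Finset.sum_subset (Finset.Icc_subset_Icc_right (by omega)) ?_).symm
      intro x hx hx2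
      simp only [Finset.mem_Icc] at hx hx2
      rw [hα2 x (by omega) hx.2, hβ3 x (by omega) hx.2]
      ring
    have hcong : ∑ ℓ ∈ Finset.Icc 1 L, (α ℓ - β ℓ) * w ℓ
        = ∑ ℓ ∈ Finset.Icc 1 L, (max 0 (ρ ℓ - δ ℓ) - (δ (ℓ + 1) - δ ℓ)) * w ℓ := by
      refine Finset.sum_congr rfl ?_
      intro x hx
      simp only [Finset.mem_Icc] at hx
      rw [hα1 x hx.1 (by omega), hβ1 x hx.1 hx.2]
    rw [Jfun, Gfun, hsub, Finset.sum_Icc_succ_top (by omega : 1 ≤ L + 1), hcong,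
      hαL1, hβ2, hw.2, hγ]
    ring
end

section
/- Let (α,β,γ) ∈ D and define δ ∈ ℝ^{L+1} by δ(ℓ) := max{min{γ − Σ_{ℓ'=ℓ}^{N+1} β(ℓ'), r̄}, 0} for ℓ ∈ {1,...,L+1}. Then δ ∈ Δ and J(w,δ) ≤ G(w,(α,β,γ)) for all w ∈ W. -/
open Finset

/-- Pointwise key inequality for the duality argument. -/
lemma clamp_key (r c c' p a w : ℝ) (hr : 0 ≤ r) (hcc : c ≤ c') (hpr : p ≤ r) (hp0 : 0 ≤ p)
    (hdual : p ≤ a + c) (ha : 0 ≤ a) (hw0 : 0 ≤ w) (hw1 : w ≤ 1) :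
    (max 0 (p - max (min c r) 0) - (max (min c' r) 0 - max (min c r) 0)) * w ≤
      (a - (c' - c)) * w +
        ((max (min c r) 0 - max c 0) - (max (min c' r) 0 - max c' 0)) := by
  have clamp_eq : ∀ x : ℝ, max (min x r) 0 = min (max x 0) r := by
    intro x
    rcases le_total x 0 with h | h
    · rw [max_eq_right (le_trans (min_le_left x r) h), max_eq_right h, min_eq_left hr]
    · rw [max_eq_left h, max_eq_left (le_min h hr)]
  have mono : ∀ x y : ℝ, x ≤ y → min y r - y ≤ min x r - x := by
    intro x y hxy
    rcases le_total x r with h | h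
    · rw [min_eq_left h]; linarith [min_le_left y r]
    · rw [min_eq_right h, min_eq_right (le_trans h hxy)]; linarith
  have e1 : ∀ x : ℝ, max x 0 - x = max (-x) 0 := by
    intro x
    rcases le_total x 0 with h | h
    · rw [max_eq_right h, max_eq_left (by linarith)]; ring
    · rw [max_eq_left h, max_eq_right (by linarith)]; ring
  set d1 := max (min c r) 0 with hd1
  set d2 := max (min c' r) 0 with hd2
  set ψ := (d1 - max c 0) - (d2 - max c' 0) with hψ
  have h2 : 0 ≤ ψ := by
    rw [hψ, hd1, hd2, clamp_eq c, clamp_eq c']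
    have := mono (max c 0) (max c' 0) (max_le_max hcc le_rfl)
    linarith
  have h1 : max 0 (p - d1) + max (-c) 0 ≤ a := by
    rcases le_total c 0 with hc | hc
    · have hd10 : d1 = 0 := by
        rw [hd1, max_eq_right (le_trans (min_le_left c r) hc)]
      rw [hd10, max_eq_left (by linarith : (0:ℝ) ≤ -c), sub_zero, max_eq_right hp0]
      linarith
    · rw [max_eq_right (by linarith : -c ≤ (0:ℝ)), add_zero]
      rcases le_total c r with hcr | hcr
      · have : d1 = c := by rw [hd1, min_eq_left hcr, max_eq_left hc]
        rw [this]; exact max_le ha (by linarith)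
      · have : d1 = r := by rw [hd1, min_eq_right hcr, max_eq_left hr]
        rw [this]; exact max_le ha (by linarith)
  have hK : max 0 (p - d1) - (d2 - d1) ≤ (a - (c' - c)) + ψ := by
    have := e1 c
    have := e1 c'
    have := le_max_right (-c') (0:ℝ)
    rw [hψ]; linarith
  have hKw := mul_le_mul_of_nonneg_right hK hw0
  have hψw : ψ * w ≤ ψ := mul_le_of_le_one_right h2 hw1
  nlinarith [hKw, hψw]

lemma telescope_Icc (f : ℕ → ℝ) (L : ℕ) :
    ∑ ℓ ∈ Finset.Icc 1 L, (f ℓ - f (ℓ + 1)) = f 1 - f (L + 1) := by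
  induction L with
  | zero => simp
  | succ n ih => rw [Finset.sum_Icc_succ_top (by omega), ih]; ring

lemma Icc_split (f : ℕ → ℝ) (L N : ℕ) (h : L ≤ N) :
    ∑ ℓ ∈ Finset.Icc 1 (N + 1), f ℓ =
      ∑ ℓ ∈ Finset.Icc 1 L, f ℓ + ∑ ℓ ∈ Finset.Icc (L + 1) (N + 1), f ℓ := by
  rw [show Finset.Icc 1 (N + 1) = Finset.Ioc 0 (N + 1) from Finset.Icc_add_one_left_eq_Ioc 0 (N + 1),
      show Finset.Icc 1 L = Finset.Ioc 0 L from Finset.Icc_add_one_left_eq_Ioc 0 L,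
      show Finset.Icc (L + 1) (N + 1) = Finset.Ioc L (N + 1) from Finset.Icc_add_one_left_eq_Ioc L (N + 1),
      Finset.sum_Ioc_consecutive _ (by omega) (by omega)]

lemma Icc_insert_bot (a b : ℕ) (h : a ≤ b) :
    Finset.Icc a b = insert a (Finset.Icc (a + 1) b) := by
  rw [Finset.Icc_add_one_left_eq_Ioc]
  exact (Finset.Ioc_insert_left h).symm

theorem stmt7
    (N L : ℕ) (hL1 : 1 ≤ L) (hLN : L ≤ N)
    (ρ : ℕ → ℝ)
    (hρpos : ∀ ℓ, 1 ≤ ℓ → ℓ ≤ N + 1 → ℓ ≠ L + 1 → 0 < ρ ℓ)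
    (hρ0 : ρ (L + 1) = 0)
    (α β : ℕ → ℝ) (γ : ℝ) (hD : memD N ρ α β γ)
    (δ : ℕ → ℝ)
    (hδdef : ∀ ℓ, 1 ≤ ℓ → ℓ ≤ L + 1 →
      δ ℓ = max (min (γ - ∑ ℓ' ∈ Finset.Icc ℓ (N + 1), β ℓ') (rbar L ρ)) 0) :
    memDelta L ρ δ ∧ ∀ w, memW N L w → Jfun L ρ w δ ≤ Gfun N w α β γ := by
  obtain ⟨hαβ, hdual⟩ := hD
  set r := rbar L ρ with hrdef
  set S : ℕ → ℝ := fun ℓ => ∑ ℓ' ∈ Finset.Icc ℓ (N + 1), β ℓ' with hSdef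
  have hδ : ∀ ℓ, 1 ≤ ℓ → ℓ ≤ L + 1 → δ ℓ = max (min (γ - S ℓ) r) 0 := hδdef
  have hdual' : ∀ ℓ, 1 ≤ ℓ → ℓ ≤ N + 1 → ρ ℓ ≤ γ + α ℓ - S ℓ := hdual
  have hρler : ∀ ℓ, 1 ≤ ℓ → ℓ ≤ L + 1 → ρ ℓ ≤ r := fun ℓ h1 h2 =>
    Finset.le_sup' ρ (Finset.mem_Icc.mpr ⟨h1, h2⟩)
  have hr0 : (0:ℝ) ≤ r := by
    have h := hρler (L + 1) (by omega) le_rfl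
    rw [hρ0] at h; exact h
  have hSstep : ∀ ℓ, ℓ ≤ N + 1 → S ℓ = β ℓ + S (ℓ + 1) := by
    intro ℓ h
    show (∑ ℓ' ∈ Finset.Icc ℓ (N + 1), β ℓ') = β ℓ + ∑ ℓ' ∈ Finset.Icc (ℓ + 1) (N + 1), β ℓ'
    rw [Icc_insert_bot ℓ (N + 1) h, Finset.sum_insert (by simp)]
  have hcmono : ∀ ℓ, 1 ≤ ℓ → ℓ ≤ N + 1 → γ - S ℓ ≤ γ - S (ℓ + 1) := by
    intro ℓ h1 h2
    have hb := (hαβ ℓ h1 h2).2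
    have := hSstep ℓ h2
    linarith
  have hmemΔ : memDelta L ρ δ := by
    refine ⟨?_, ?_, ?_⟩
    · rw [hδ 1 le_rfl (by omega)]; exact le_max_right _ _
    · intro ℓ h1 h2
      rw [hδ ℓ h1 (by omega), hδ (ℓ + 1) (by omega) (by omega)]
      exact max_le_max (min_le_min_right _ (hcmono ℓ h1 (by omega))) le_rfl
    · rw [hδ (L + 1) (by omega) le_rfl]
      exact max_le (min_le_right _ _) hr0
  refine ⟨hmemΔ, ?_⟩
  rintro w ⟨hw, hwL1⟩
  set φ : ℕ → ℝ := fun ℓ => δ ℓ - max (γ - S ℓ) 0 with hφdef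
  have hperterm : ∀ ℓ ∈ Finset.Icc 1 L,
      (max 0 (ρ ℓ - δ ℓ) - (δ (ℓ + 1) - δ ℓ)) * w ℓ ≤
        (α ℓ - β ℓ) * w ℓ + (φ ℓ - φ (ℓ + 1)) := by
    intro ℓ hmem
    rw [Finset.mem_Icc] at hmem
    obtain ⟨h1, h2⟩ := hmem
    have hβeq : β ℓ = (γ - S (ℓ + 1)) - (γ - S ℓ) := by
      have := hSstep ℓ (by omega); linarith
    have hkey := clamp_key r (γ - S ℓ) (γ - S (ℓ + 1)) (ρ ℓ) (α ℓ) (w ℓ)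
      hr0 (hcmono ℓ h1 (by omega)) (hρler ℓ h1 (by omega))
      (le_of_lt (hρpos ℓ h1 (by omega) (by omega)))
      (by have := hdual' ℓ h1 (by omega); linarith)
      (hαβ ℓ h1 (by omega)).1 (hw ℓ h1 (by omega)).1 (hw ℓ h1 (by omega)).2
    rw [hδ ℓ h1 (by omega), hδ (ℓ + 1) (by omega) (by omega), hφdef]
    simp only
    rw [hδ ℓ h1 (by omega), hδ (ℓ + 1) (by omega) (by omega), hβeq]
    convert hkey using 2
  have hsum1 : ∑ ℓ ∈ Finset.Icc 1 L, (max 0 (ρ ℓ - δ ℓ) - (δ (ℓ + 1) - δ ℓ)) * w ℓ ≤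
      ∑ ℓ ∈ Finset.Icc 1 L, ((α ℓ - β ℓ) * w ℓ + (φ ℓ - φ (ℓ + 1))) :=
    Finset.sum_le_sum hperterm
  rw [Finset.sum_add_distrib, telescope_Icc φ L] at hsum1
  have hφ1 : φ 1 ≤ 0 := by
    rw [hφdef]
    simp only
    rw [hδ 1 le_rfl (by omega)]
    have h1 : max (min (γ - S 1) r) 0 ≤ max (γ - S 1) 0 :=
      max_le_max (min_le_left _ _) le_rfl
    linarith
  have hφL1 : δ (L + 1) - φ (L + 1) = max (γ - S (L + 1)) 0 := by
    rw [hφdef]; ring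
  have htail : α (L + 1) - S (L + 1) ≤
      ∑ ℓ ∈ Finset.Icc (L + 1) (N + 1), (α ℓ - β ℓ) * w ℓ := by
    rw [Icc_insert_bot (L + 1) (N + 1) (by omega), Finset.sum_insert (by simp), hwL1, mul_one]
    have hper : ∀ ℓ ∈ Finset.Icc (L + 2) (N + 1), -β ℓ ≤ (α ℓ - β ℓ) * w ℓ := by
      intro ℓ hmem
      rw [Finset.mem_Icc] at hmem
      obtain ⟨h1, h2⟩ := hmem
      have hα := (hαβ ℓ (by omega) h2).1
      have hβ := (hαβ ℓ (by omega) h2).2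
      have hw0 := (hw ℓ (by omega) h2).1
      have hw1 := (hw ℓ (by omega) h2).2
      nlinarith
    have := Finset.sum_le_sum hper
    rw [Finset.sum_neg_distrib] at this
    have hSL1 : S (L + 1) = β (L + 1) + ∑ ℓ ∈ Finset.Icc (L + 2) (N + 1), β ℓ :=
      hSstep (L + 1) (by omega)
    linarith
  have hfinal : max (γ - S (L + 1)) 0 ≤ γ + α (L + 1) - S (L + 1) := by
    have hα := (hαβ (L + 1) (by omega) (by omega)).1
    have hd := hdual' (L + 1) (by omega) (by omega)
    rw [hρ0] at hd
    exact max_le (by linarith) (by linarith)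
  rw [Jfun, Gfun, Icc_split (fun ℓ => (α ℓ - β ℓ) * w ℓ) L N hLN]
  linarith
end

section
/- Let w ∈ W have all of its coordinates in {0,1}, and let ℓ* := min{ℓ ∈ {1,...,L+1} : w(ℓ) = 1} (well defined since w(L+1) = 1). Define δ ∈ ℝ^{L+1} by δ(ℓ) := ρ(ℓ*) for ℓ ∈ {1,...,ℓ*} and δ(ℓ) := r̄ for ℓ ∈ {ℓ*+1,...,L+1}. Then δ ∈ Δ, J(w,δ) = ρ(ℓ*), and J(w,δ) ≤ J(w,δ') for every δ' ∈ Δ; that is, δ is an optimal solution of the problem of minimizing J(w,·) over Δ. -/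
open Finset

/-- Telescoping sum over `Icc a b`. -/
lemma tel_aux (f : ℕ → ℝ) (a : ℕ) : ∀ b, a ≤ b →
    ∑ ℓ ∈ Finset.Icc a b, (f (ℓ + 1) - f ℓ) = f (b + 1) - f a := by
  intro b hab
  induction b, hab using Nat.le_induction with
  | base => simp
  | succ b hab ih => rw [Finset.sum_Icc_succ_top (by omega), ih]; ring

theorem stmt8
    (N L : ℕ) (hL1 : 1 ≤ L) (hLN : L ≤ N)
    (ρ : ℕ → ℝ)
    (hρpos : ∀ ℓ, 1 ≤ ℓ → ℓ ≤ N + 1 → ℓ ≠ L + 1 → 0 < ρ ℓ)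
    (hρ0 : ρ (L + 1) = 0)
    (w : ℕ → ℝ) (hw : memW N L w)
    (hbin : ∀ ℓ, 1 ≤ ℓ → ℓ ≤ N + 1 → w ℓ = 0 ∨ w ℓ = 1)
    (lstar : ℕ) (hl1 : 1 ≤ lstar) (hl2 : lstar ≤ L + 1) (hl3 : w lstar = 1)
    (hlmin : ∀ ℓ, 1 ≤ ℓ → ℓ < lstar → w ℓ ≠ 1)
    (δ : ℕ → ℝ)
    (hδ1 : ∀ ℓ, 1 ≤ ℓ → ℓ ≤ lstar → δ ℓ = ρ lstar)
    (hδ2 : ∀ ℓ, lstar + 1 ≤ ℓ → ℓ ≤ L + 1 → δ ℓ = rbar L ρ) :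
    memDelta L ρ δ ∧ Jfun L ρ w δ = ρ lstar ∧
      ∀ δ', memDelta L ρ δ' → Jfun L ρ w δ ≤ Jfun L ρ w δ' := by
  -- basic facts
  have hrbar_ge : ∀ ℓ, 1 ≤ ℓ → ℓ ≤ L + 1 → ρ ℓ ≤ rbar L ρ := fun ℓ h1 h2 =>
    Finset.le_sup' ρ (Finset.mem_Icc.mpr ⟨h1, h2⟩)
  have hρl_nonneg : 0 ≤ ρ lstar := by
    rcases eq_or_ne lstar (L + 1) with h | h
    · rw [h, hρ0]
    · exact le_of_lt (hρpos lstar hl1 (by omega) h)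
  have hw0 : ∀ ℓ, 1 ≤ ℓ → ℓ < lstar → w ℓ = 0 := by
    intro ℓ h1 h2
    rcases hbin ℓ h1 (by omega) with h | h
    · exact h
    · exact absurd h (hlmin ℓ h1 h2)
  -- membership of δ in Δ
  have hmem : memDelta L ρ δ := by
    refine ⟨by rw [hδ1 1 le_rfl hl1]; exact hρl_nonneg, ?_, ?_⟩
    · intro ℓ h1 h2
      by_cases hc : ℓ + 1 ≤ lstar
      · rw [hδ1 ℓ h1 (by omega), hδ1 (ℓ + 1) (by omega) hc]
      · rw [hδ2 (ℓ + 1) (by omega) (by omega)]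
        by_cases hc2 : ℓ ≤ lstar
        · rw [hδ1 ℓ h1 hc2]; exact hrbar_ge lstar hl1 hl2
        · rw [hδ2 ℓ (by omega) (by omega)]
    · by_cases h : L + 1 ≤ lstar
      · rw [hδ1 (L + 1) (by omega) h]; exact hrbar_ge lstar hl1 hl2
      · rw [hδ2 (L + 1) (by omega) le_rfl]
  refine ⟨hmem, ?_⟩
  -- value of J(w, δ)
  have hJ : Jfun L ρ w δ = ρ lstar := by
    by_cases hls : lstar ≤ L
    · have hsum : ∑ ℓ ∈ Finset.Icc 1 L, (max 0 (ρ ℓ - δ ℓ) - (δ (ℓ + 1) - δ ℓ)) * w ℓ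
          = (max 0 (ρ lstar - δ lstar) - (δ (lstar + 1) - δ lstar)) * w lstar := by
        refine Finset.sum_eq_single_of_mem lstar (Finset.mem_Icc.mpr ⟨hl1, hls⟩) ?_
        intro ℓ hmemℓ hne
        rw [Finset.mem_Icc] at hmemℓ
        rcases lt_or_gt_of_ne hne with hlt | hgt
        · rw [hw0 ℓ hmemℓ.1 hlt, mul_zero]
        · rw [hδ2 ℓ (by omega) (by omega), hδ2 (ℓ + 1) (by omega) (by omega)]
          have : max 0 (ρ ℓ - rbar L ρ) = 0 :=
            max_eq_left (by linarith [hrbar_ge ℓ hmemℓ.1 (by omega)])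
          rw [this]; ring
      rw [Jfun, hsum, hδ1 lstar hl1 le_rfl, hδ2 (lstar + 1) le_rfl (by omega),
        hδ2 (L + 1) (by omega) le_rfl, hl3, sub_self, max_self]
      ring
    · have hlL : lstar = L + 1 := by omega
      have hsum : ∑ ℓ ∈ Finset.Icc 1 L, (max 0 (ρ ℓ - δ ℓ) - (δ (ℓ + 1) - δ ℓ)) * w ℓ = 0 := by
        refine Finset.sum_eq_zero ?_
        intro ℓ hmemℓ
        rw [Finset.mem_Icc] at hmemℓ
        rw [hw0 ℓ hmemℓ.1 (by omega), mul_zero]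
      rw [Jfun, hsum, hδ1 (L + 1) (by omega) (by omega)]
      ring
  refine ⟨hJ, ?_⟩
  -- optimality
  intro δ' hδ'
  obtain ⟨h0, hmon, htop⟩ := hδ'
  have hmono : ∀ a b, 1 ≤ a → a ≤ b → b ≤ L + 1 → δ' a ≤ δ' b := by
    intro a b ha hab
    induction b, hab using Nat.le_induction with
    | base => intro _; exact le_rfl
    | succ b hab ih =>
      intro hb
      exact le_trans (ih (by omega)) (hmon b (by omega) (by omega))
  rw [hJ]
  by_cases hls : lstar ≤ L
  · -- drop the terms with ℓ < lstar (they vanish)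
    have hsub : ∑ ℓ ∈ Finset.Icc lstar L, (max 0 (ρ ℓ - δ' ℓ) - (δ' (ℓ + 1) - δ' ℓ)) * w ℓ
        = ∑ ℓ ∈ Finset.Icc 1 L, (max 0 (ρ ℓ - δ' ℓ) - (δ' (ℓ + 1) - δ' ℓ)) * w ℓ := by
      refine Finset.sum_subset ?_ ?_
      · intro x hx; rw [Finset.mem_Icc] at *; omega
      · intro x hx hnx
        rw [Finset.mem_Icc] at hx hnx
        rw [hw0 x hx.1 (by omega), mul_zero]
    have hbound : ∑ ℓ ∈ Finset.Icc lstar L,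
        ((if ℓ = lstar then ρ lstar - δ' lstar else 0) - (δ' (ℓ + 1) - δ' ℓ))
        ≤ ∑ ℓ ∈ Finset.Icc lstar L, (max 0 (ρ ℓ - δ' ℓ) - (δ' (ℓ + 1) - δ' ℓ)) * w ℓ := by
      refine Finset.sum_le_sum ?_
      intro ℓ hmemℓ
      rw [Finset.mem_Icc] at hmemℓ
      by_cases hll : ℓ = lstar
      · subst hll
        rw [if_pos rfl, hl3, mul_one]
        have := le_max_right 0 (ρ ℓ - δ' ℓ)
        linarith
      · rw [if_neg hll]
        have hd : δ' ℓ ≤ δ' (ℓ + 1) := hmon ℓ (by omega) hmemℓ.2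
        have hm := le_max_left 0 (ρ ℓ - δ' ℓ)
        rcases hbin ℓ (by omega) (by omega) with h | h
        · rw [h, mul_zero]; linarith
        · rw [h, mul_one]; linarith
    have hsum1 : ∑ ℓ ∈ Finset.Icc lstar L,
        (if ℓ = lstar then ρ lstar - δ' lstar else 0) = ρ lstar - δ' lstar := by
      rw [Finset.sum_ite_eq' (Finset.Icc lstar L) lstar
        (fun _ => ρ lstar - δ' lstar), if_pos (Finset.mem_Icc.mpr ⟨le_rfl, hls⟩)]
    have htel : ∑ ℓ ∈ Finset.Icc lstar L, (δ' (ℓ + 1) - δ' ℓ) = δ' (L + 1) - δ' lstar :=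
      tel_aux δ' lstar L hls
    rw [Finset.sum_sub_distrib, hsum1, htel] at hbound
    rw [Jfun, ← hsub]
    linarith
  · -- lstar = L + 1 : all w ℓ vanish on Icc 1 L
    have hsum : ∑ ℓ ∈ Finset.Icc 1 L, (max 0 (ρ ℓ - δ' ℓ) - (δ' (ℓ + 1) - δ' ℓ)) * w ℓ = 0 := by
      refine Finset.sum_eq_zero ?_
      intro ℓ hmemℓ
      rw [Finset.mem_Icc] at hmemℓ
      rw [hw0 ℓ hmemℓ.1 (by omega), mul_zero]
    have hlL : lstar = L + 1 := by omega
    have : δ' 1 ≤ δ' (L + 1) := hmono 1 (L + 1) le_rfl (by omega) le_rfl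
    rw [Jfun, hsum, hlL, hρ0]
    linarith
end

section
/- If δ ∈ Δ does not satisfy all four of properties (P1), (P2), (P3), (P4), then δ is not a Pareto cut; that is, there exists δ' ∈ Δ that dominates δ. -/
open Finset

/-- `T(δ) = max {ℓ ∈ {1,…,L+1} : δ ℓ ≤ ρ ℓ}`. -/
noncomputable def Tof (L : ℕ) (ρ δ : ℕ → ℝ) : ℕ :=
  sSup {ℓ : ℕ | 1 ≤ ℓ ∧ ℓ ≤ L + 1 ∧ δ ℓ ≤ ρ ℓ}

/-- Property (P1). -/
def P1 (L : ℕ) (ρ δ : ℕ → ℝ) : Prop := 1 < Tof L ρ δ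

/-- Property (P2). -/
def P2 (ρ δ : ℕ → ℝ) : Prop := δ 1 ≤ ρ 1

/-- Property (P3). -/
def P3 (L : ℕ) (ρ δ : ℕ → ℝ) : Prop :=
  ∀ ℓ, 2 ≤ ℓ → ℓ ≤ L → δ ℓ < ρ ℓ → δ ℓ = δ (ℓ + 1)

/-- Property (P4). -/
def P4 (L : ℕ) (ρ δ : ℕ → ℝ) : Prop :=
  ∀ ℓ, Tof L ρ δ ≤ ℓ → ℓ ≤ L + 1 → δ ℓ = δ (Tof L ρ δ)

private lemma delta_mono' {L : ℕ} {δ : ℕ → ℝ}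
    (hmono : ∀ ℓ, 1 ≤ ℓ → ℓ ≤ L → δ ℓ ≤ δ (ℓ + 1)) :
    ∀ j i, 1 ≤ i → i ≤ j → j ≤ L + 1 → δ i ≤ δ j := by
  intro j
  induction j with
  | zero => intro i h1 h2 _; omega
  | succ n ih =>
    intro i h1 h2 h3
    rcases Nat.eq_or_lt_of_le h2 with rfl | hlt
    · rfl
    · have hn : i ≤ n := by omega
      have h1n : 1 ≤ n := by omega
      exact (ih i h1 hn (by omega)).trans (hmono n h1n (by omega))

private lemma sum_le_telescope (n : ℕ) (u g : ℕ → ℝ)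
    (h : ∀ ℓ, 1 ≤ ℓ → ℓ ≤ n → u ℓ ≤ g (ℓ + 1) - g ℓ) :
    ∑ ℓ ∈ Finset.Icc 1 n, u ℓ ≤ g (n + 1) - g 1 := by
  induction n with
  | zero => simp
  | succ n ih =>
    rw [Finset.sum_Icc_succ_top (by omega : 1 ≤ n + 1)]
    have := ih (fun ℓ h1 h2 => h ℓ h1 (by omega))
    have h2 := h (n+1) (by omega) le_rfl
    linarith

private lemma min_eq_sub_max (a c : ℝ) : min a c = a - max 0 (a - c) := by
  rcases le_total a c with h | h
  · rw [min_eq_left h, max_eq_left (by linarith)]; ring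
  · rw [min_eq_right h, max_eq_right (by linarith)]; ring

private lemma max0_add_le (x t : ℝ) (ht : 0 ≤ t) : max 0 (x + t) ≤ max 0 x + t := by
  apply max_le
  · have := le_max_left 0 x; linarith
  · have := le_max_right 0 x; linarith

private lemma Jfun_sub (L : ℕ) (ρ w δ δ' : ℕ → ℝ) :
    Jfun L ρ w δ' - Jfun L ρ w δ = (δ' (L+1) - δ (L+1)) +
      ∑ ℓ ∈ Finset.Icc 1 L,
        ((max 0 (ρ ℓ - δ' ℓ) - (δ' (ℓ+1) - δ' ℓ)) - (max 0 (ρ ℓ - δ ℓ) - (δ (ℓ+1) - δ ℓ))) * w ℓ := by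
  simp only [Jfun, sub_mul, Finset.sum_sub_distrib]
  ring
private lemma Tof_spec (L : ℕ) (ρ δ : ℕ → ℝ) (hδ : memDelta L ρ δ) :
    (1 ≤ Tof L ρ δ ∧ Tof L ρ δ ≤ L + 1 ∧ δ (Tof L ρ δ) ≤ ρ (Tof L ρ δ)) ∧
    ∀ ℓ, 1 ≤ ℓ → ℓ ≤ L + 1 → δ ℓ ≤ ρ ℓ → ℓ ≤ Tof L ρ δ := by
  obtain ⟨hδ0, hmono, htop⟩ := hδ
  set S : Set ℕ := {ℓ : ℕ | 1 ≤ ℓ ∧ ℓ ≤ L + 1 ∧ δ ℓ ≤ ρ ℓ} with hS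
  have hbdd : BddAbove S := ⟨L + 1, fun x hx => hx.2.1⟩
  obtain ⟨m, hm, hsup⟩ := Finset.exists_mem_eq_sup'
    (Finset.nonempty_Icc.mpr (by omega : 1 ≤ L + 1)) ρ
  rw [Finset.mem_Icc] at hm
  have hmem : m ∈ S := by
    refine ⟨hm.1, hm.2, ?_⟩
    have h1 : δ m ≤ δ (L + 1) := delta_mono' hmono (L + 1) m hm.1 hm.2 le_rfl
    have h2 : δ (L + 1) ≤ ρ m := by
      have : rbar L ρ = ρ m := hsup
      linarith
    linarith
  have hne : S.Nonempty := ⟨m, hmem⟩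
  have hT : Tof L ρ δ ∈ S := Nat.sSup_mem hne hbdd
  exact ⟨⟨hT.1, hT.2.1, hT.2.2⟩, fun ℓ h1 h2 h3 => le_csSup hbdd ⟨h1, h2, h3⟩⟩
private lemma single_dominates (N L : ℕ) (hLN : L ≤ N) (ρ δ δ' : ℕ → ℝ)
    (m : ℕ) (hm1 : 1 ≤ m) (hmL : m ≤ L)
    (htop : δ' (L + 1) = δ (L + 1))
    (heq : ∀ ℓ, 1 ≤ ℓ → ℓ ≤ L → ℓ ≠ m →
      max 0 (ρ ℓ - δ' ℓ) - (δ' (ℓ + 1) - δ' ℓ) = max 0 (ρ ℓ - δ ℓ) - (δ (ℓ + 1) - δ ℓ))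
    (hlt : max 0 (ρ m - δ' m) - (δ' (m + 1) - δ' m) < max 0 (ρ m - δ m) - (δ (m + 1) - δ m)) :
    dominatesDelta N L ρ δ' δ := by
  have key : ∀ w : ℕ → ℝ, Jfun L ρ w δ' - Jfun L ρ w δ =
      ((max 0 (ρ m - δ' m) - (δ' (m + 1) - δ' m)) - (max 0 (ρ m - δ m) - (δ (m + 1) - δ m))) * w m := by
    intro w
    rw [Jfun_sub, htop]
    rw [Finset.sum_eq_single_of_mem m (Finset.mem_Icc.mpr ⟨hm1, hmL⟩)]
    · ring
    · intro ℓ hℓ hne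
      rw [Finset.mem_Icc] at hℓ
      rw [heq ℓ hℓ.1 hℓ.2 hne]
      ring
  constructor
  · intro w hw
    have hw0 : 0 ≤ w m := (hw.1 m hm1 (by omega)).1
    have := key w
    nlinarith
  · refine ⟨fun _ => 1, ⟨fun ℓ _ _ => ⟨zero_le_one, le_rfl⟩, rfl⟩, ?_⟩
    have := key (fun _ => 1)
    simp only [mul_one] at this
    linarith
private lemma cap_dominates (N L : ℕ) (hL1 : 1 ≤ L) (hLN : L ≤ N)
    (ρ δ : ℕ → ℝ) (hδ : memDelta L ρ δ) (c : ℝ)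
    (hc0 : 0 ≤ c) (hclt : c < δ (L + 1))
    (hcmin : ∀ ℓ, 2 ≤ ℓ → ℓ ≤ L → δ ℓ ≤ c ∨ ρ ℓ ≤ c) :
    ∃ δ', memDelta L ρ δ' ∧ dominatesDelta N L ρ δ' δ := by
  obtain ⟨hδ0, hmono, htop⟩ := hδ
  set e : ℕ → ℝ := fun ℓ => max 0 (δ ℓ - c) with he
  set g : ℕ → ℝ := fun ℓ => if ℓ = 1 then 0 else e ℓ with hg
  set δ' : ℕ → ℝ := fun ℓ => min (δ ℓ) c with hδ'
  have hmin : ∀ ℓ, δ' ℓ = δ ℓ - e ℓ := fun ℓ => min_eq_sub_max _ _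
  have he0 : ∀ ℓ, 0 ≤ e ℓ := fun ℓ => le_max_left _ _
  have hemono : ∀ i j, δ i ≤ δ j → e i ≤ e j := by
    intro i j hij
    exact max_le (le_max_left _ _) (le_trans (by linarith) (le_max_right _ _))
  have htopmin : δ' (L + 1) = c := min_eq_right (le_of_lt hclt)
  -- the per-term bound
  have hweak : ∀ w, memW N L w → Jfun L ρ w δ' ≤ Jfun L ρ w δ := by
    intro w hw
    have hkey : ∀ ℓ, 1 ≤ ℓ → ℓ ≤ L →
        ((max 0 (ρ ℓ - δ' ℓ) - (δ' (ℓ + 1) - δ' ℓ)) - (max 0 (ρ ℓ - δ ℓ) - (δ (ℓ + 1) - δ ℓ))) * w ℓ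
        ≤ g (ℓ + 1) - g ℓ := by
      intro ℓ h1 h2
      obtain ⟨hw0, hw1⟩ := hw.1 ℓ h1 (by omega)
      have hgedge : g (ℓ + 1) = e (ℓ + 1) := if_neg (by omega)
      have hD : (max 0 (ρ ℓ - δ' ℓ) - (δ' (ℓ + 1) - δ' ℓ)) - (max 0 (ρ ℓ - δ ℓ) - (δ (ℓ + 1) - δ ℓ))
          ≤ g (ℓ + 1) - g ℓ ∧ 0 ≤ g (ℓ + 1) - g ℓ := by
        rcases Nat.eq_or_lt_of_le h1 with rfl | hℓ2
        · -- ℓ = 1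
          have hg1 : g 1 = 0 := if_pos rfl
          have hB : max 0 (ρ 1 - (δ 1 - e 1)) ≤ max 0 (ρ 1 - δ 1) + e 1 := by
            have harg : ρ 1 - (δ 1 - e 1) = (ρ 1 - δ 1) + e 1 := by ring
            rw [harg]; exact max0_add_le _ _ (he0 1)
          constructor
          · rw [hg1, hgedge, hmin 1, hmin 2]; linarith
          · rw [hg1, hgedge]; linarith [he0 2]
        · -- 2 ≤ ℓ
          have hgl : g ℓ = e ℓ := if_neg (by omega)
          have hmono' : δ ℓ ≤ δ (ℓ + 1) := hmono ℓ h1 h2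
          have hge : 0 ≤ g (ℓ + 1) - g ℓ := by
            rw [hgl, hgedge]; linarith [hemono ℓ (ℓ + 1) hmono']
          refine ⟨?_, hge⟩
          have hBzero : max 0 (ρ ℓ - δ' ℓ) = max 0 (ρ ℓ - δ ℓ) := by
            rcases hcmin ℓ hℓ2 h2 with h' | h'
            · have heq0 : e ℓ = 0 := max_eq_left (by linarith)
              have hdd : δ' ℓ = δ ℓ := by rw [hmin ℓ, heq0]; ring
              rw [hdd]
            · rcases le_total (δ ℓ) c with hlc | hcl
              · have heq0 : e ℓ = 0 := max_eq_left (by linarith)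
                have hdd : δ' ℓ = δ ℓ := by rw [hmin ℓ, heq0]; ring
                rw [hdd]
              · have hd : δ' ℓ = c := min_eq_right hcl
                have h1' : max 0 (ρ ℓ - δ' ℓ) = 0 := by rw [hd]; exact max_eq_left (by linarith)
                have h2' : max 0 (ρ ℓ - δ ℓ) = 0 := max_eq_left (by linarith)
                rw [h1', h2']
          rw [hgl, hgedge, hBzero, hmin ℓ, hmin (ℓ + 1)]
          linarith
      rcases le_or_gt (((max 0 (ρ ℓ - δ' ℓ) - (δ' (ℓ + 1) - δ' ℓ)) - (max 0 (ρ ℓ - δ ℓ) - (δ (ℓ + 1) - δ ℓ)))) 0 with hD0 | hD0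
      · calc _ ≤ (0:ℝ) := mul_nonpos_of_nonpos_of_nonneg hD0 hw0
          _ ≤ _ := hD.2
      · nlinarith [hD.1, hD.2]
    have hsum := sum_le_telescope L
      (fun ℓ => ((max 0 (ρ ℓ - δ' ℓ) - (δ' (ℓ + 1) - δ' ℓ)) - (max 0 (ρ ℓ - δ ℓ) - (δ (ℓ + 1) - δ ℓ))) * w ℓ)
      g hkey
    have hgL : g (L + 1) = δ (L + 1) - c := by
      have : g (L + 1) = e (L + 1) := if_neg (by omega)
      rw [this]; exact max_eq_right (by linarith)
    have hg1 : g 1 = 0 := if_pos rfl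
    have hJ := Jfun_sub L ρ w δ δ'
    rw [htopmin] at hJ
    rw [hgL, hg1] at hsum
    linarith
  refine ⟨δ', ⟨le_min hδ0 hc0, fun ℓ h1 h2 => min_le_min (hmono ℓ h1 h2) le_rfl,
    le_trans (min_le_left _ _) htop⟩, hweak, ?_⟩
  -- strict witness
  refine ⟨fun ℓ => if ℓ = L + 1 then 1 else 0, ⟨fun ℓ _ _ => ?_, if_pos rfl⟩, ?_⟩
  · by_cases hc : ℓ = L + 1 <;> simp [hc]
  · have hz : ∀ δ'' : ℕ → ℝ, Jfun L ρ (fun ℓ => if ℓ = L + 1 then (1:ℝ) else 0) δ'' = δ'' (L + 1) := by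
      intro δ''
      rw [Jfun]
      rw [Finset.sum_eq_zero, add_zero]
      intro ℓ hℓ
      rw [Finset.mem_Icc] at hℓ
      rw [if_neg (by omega), mul_zero]
    rw [hz, hz, htopmin]
    exact hclt
theorem stmt9
    (N L : ℕ) (hL1 : 1 ≤ L) (hLN : L ≤ N)
    (ρ : ℕ → ℝ)
    (hρpos : ∀ ℓ, 1 ≤ ℓ → ℓ ≤ N + 1 → ℓ ≠ L + 1 → 0 < ρ ℓ)
    (hρ0 : ρ (L + 1) = 0)
    (δ : ℕ → ℝ) (hδ : memDelta L ρ δ)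
    (h : ¬ (P1 L ρ δ ∧ P2 ρ δ ∧ P3 L ρ δ ∧ P4 L ρ δ)) :
    ∃ δ', memDelta L ρ δ' ∧ dominatesDelta N L ρ δ' δ := by
  obtain ⟨hδ0, hδmono, hδtop⟩ := id hδ
  obtain ⟨⟨hT1, hTL, hTρ⟩, hTmax⟩ := Tof_spec L ρ δ hδ
  have hρ1 : 0 < ρ 1 := hρpos 1 le_rfl (by omega) (by omega)
  by_cases hp2 : P2 ρ δ
  case neg =>
    simp only [P2, not_le] at hp2
    set δ' : ℕ → ℝ := fun ℓ => if ℓ = 1 then ρ 1 else δ ℓ with hδ'def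
    have hd1 : δ' 1 = ρ 1 := if_pos rfl
    have hdo : ∀ ℓ, ℓ ≠ 1 → δ' ℓ = δ ℓ := fun ℓ hh => if_neg hh
    have hmono12 := hδmono 1 le_rfl hL1
    refine ⟨δ', ⟨?_, ?_, ?_⟩, ?_⟩
    · rw [hd1]; linarith
    · intro ℓ h1 h2
      by_cases hℓ : ℓ = 1
      · subst hℓ
        rw [hd1, hdo 2 (by omega)]
        linarith
      · rw [hdo ℓ hℓ, hdo (ℓ + 1) (by omega)]
        exact hδmono ℓ h1 h2
    · rw [hdo (L + 1) (by omega)]; exact hδtop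
    · apply single_dominates N L hLN ρ δ δ' 1 le_rfl hL1
      · exact hdo (L + 1) (by omega)
      · intro ℓ h1 h2 hne
        rw [hdo ℓ hne, hdo (ℓ + 1) (by omega)]
      · rw [hd1, hdo 2 (by omega)]
        have e1 : max 0 (ρ 1 - ρ 1) = 0 := by simp
        have e2 : max 0 (ρ 1 - δ 1) = 0 := max_eq_left (by linarith)
        rw [e1, e2]
        linarith
  by_cases hp3 : P3 L ρ δ
  case neg =>
    simp only [P3, not_forall] at hp3
    obtain ⟨k, hk2, hkL, hkρ, hkne⟩ := hp3
    have hkup : δ k < δ (k + 1) := lt_of_le_of_ne (hδmono k (by omega) hkL) hkne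
    set c : ℝ := min (ρ k) (δ (k + 1)) with hcdef
    have hck : δ k < c := lt_min hkρ hkup
    have hcρ : c ≤ ρ k := min_le_left _ _
    have hcd : c ≤ δ (k + 1) := min_le_right _ _
    set δ' : ℕ → ℝ := fun ℓ => if ℓ = k then c else δ ℓ with hδ'def
    have hdk : δ' k = c := if_pos rfl
    have hdo : ∀ ℓ, ℓ ≠ k → δ' ℓ = δ ℓ := fun ℓ hh => if_neg hh
    refine ⟨δ', ⟨?_, ?_, ?_⟩, ?_⟩
    · rw [hdo 1 (by omega)]; exact hδ0
    · intro ℓ h1 h2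
      by_cases hℓ : ℓ = k
      · subst hℓ
        rw [hdk, hdo (ℓ + 1) (by omega)]
        exact hcd
      · by_cases hℓ' : ℓ + 1 = k
        · have hlk : δ ℓ ≤ δ k := by rw [← hℓ']; exact hδmono ℓ h1 h2
          rw [hdo ℓ hℓ, hℓ', hdk]
          linarith
        · rw [hdo ℓ hℓ, hdo (ℓ + 1) hℓ']
          exact hδmono ℓ h1 h2
    · rw [hdo (L + 1) (by omega)]; exact hδtop
    · apply single_dominates N L hLN ρ δ δ' (k - 1) (by omega) (by omega)
      · exact hdo (L + 1) (by omega)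
      · intro ℓ h1 h2 hne
        by_cases hℓk : ℓ = k
        · subst hℓk
          rw [hdk, hdo (ℓ + 1) (by omega)]
          have m1 : max 0 (ρ ℓ - c) = ρ ℓ - c := max_eq_right (by linarith)
          have m2 : max 0 (ρ ℓ - δ ℓ) = ρ ℓ - δ ℓ := max_eq_right (by linarith)
          rw [m1, m2]; ring
        · rw [hdo ℓ hℓk, hdo (ℓ + 1) (by omega)]
      · have hkk : k - 1 + 1 = k := by omega
        rw [hkk, hdk, hdo (k - 1) (by omega)]
        linarith
  by_cases hp1 : P1 L ρ δ
  case neg =>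
    simp only [P1, not_lt] at hp1
    have hT : Tof L ρ δ = 1 := by omega
    have hgt : ∀ ℓ, 2 ≤ ℓ → ℓ ≤ L + 1 → ρ ℓ < δ ℓ := by
      intro ℓ hℓ2 hℓL
      by_contra hcon
      push_neg at hcon
      have := hTmax ℓ (by omega) hℓL hcon
      omega
    have hLpos : 0 < δ (L + 1) := by
      have := hgt (L + 1) (by omega) le_rfl
      linarith [hρ0 ▸ this]
    have hne : (insert (0:ℝ) ((Finset.Icc 2 L).image ρ)).Nonempty := Finset.insert_nonempty _ _
    set c := (insert (0:ℝ) ((Finset.Icc 2 L).image ρ)).max' hne with hc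
    apply cap_dominates N L hL1 hLN ρ δ hδ c
    · exact Finset.le_max' _ 0 (Finset.mem_insert_self _ _)
    · rw [Finset.max'_lt_iff]
      intro x hx
      rcases Finset.mem_insert.mp hx with rfl | hx
      · exact hLpos
      · obtain ⟨ℓ, hℓ, rfl⟩ := Finset.mem_image.mp hx
        rw [Finset.mem_Icc] at hℓ
        have h1 := hgt ℓ hℓ.1 (by omega)
        have h2 := delta_mono' hδmono (L + 1) ℓ (by omega) (by omega) le_rfl
        linarith
    · intro ℓ h2 hL
      right
      exact Finset.le_max' _ _ (Finset.mem_insert_of_mem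
        (Finset.mem_image_of_mem ρ (Finset.mem_Icc.mpr ⟨h2, hL⟩)))
  -- remaining case: ¬ P4
  have hp4 : ¬ P4 L ρ δ := fun hp4 => h ⟨hp1, hp2, hp3, hp4⟩
  simp only [P4, not_forall] at hp4
  obtain ⟨j, hjT, hjL, hjne⟩ := hp4
  set T := Tof L ρ δ with hTdef
  have hj1 : 1 ≤ j := le_trans hT1 hjT
  have hTj : δ T ≤ δ j := delta_mono' hδmono j T hT1 hjT hjL
  have hjtop : δ j ≤ δ (L + 1) := delta_mono' hδmono (L + 1) j hj1 hjL le_rfl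
  have hTlt : δ T < δ (L + 1) := lt_of_lt_of_le (lt_of_le_of_ne hTj (Ne.symm hjne)) hjtop
  have hgt : ∀ ℓ, T < ℓ → ℓ ≤ L + 1 → ρ ℓ < δ ℓ := by
    intro ℓ hℓT hℓL
    by_contra hcon
    push_neg at hcon
    have := hTmax ℓ (by omega) hℓL hcon
    omega
  have hne : (insert (δ T) ((Finset.Icc (T + 1) L).image ρ)).Nonempty := Finset.insert_nonempty _ _
  set c := (insert (δ T) ((Finset.Icc (T + 1) L).image ρ)).max' hne with hc
  have hδT0 : 0 ≤ δ T := le_trans hδ0 (delta_mono' hδmono T 1 le_rfl hT1 hTL)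
  apply cap_dominates N L hL1 hLN ρ δ hδ c
  · exact le_trans hδT0 (Finset.le_max' _ _ (Finset.mem_insert_self _ _))
  · rw [Finset.max'_lt_iff]
    intro x hx
    rcases Finset.mem_insert.mp hx with rfl | hx
    · exact hTlt
    · obtain ⟨ℓ, hℓ, rfl⟩ := Finset.mem_image.mp hx
      rw [Finset.mem_Icc] at hℓ
      have h1 := hgt ℓ (by omega) (by omega)
      have h2 := delta_mono' hδmono (L + 1) ℓ (by omega) (by omega) le_rfl
      linarith
  · intro ℓ h2 hL
    by_cases hℓT : ℓ ≤ T
    · left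
      exact le_trans (delta_mono' hδmono T ℓ (by omega) hℓT hTL)
        (Finset.le_max' _ _ (Finset.mem_insert_self _ _))
    · right
      exact Finset.le_max' _ _ (Finset.mem_insert_of_mem
        (Finset.mem_image_of_mem ρ (Finset.mem_Icc.mpr ⟨by omega, hL⟩)))
end

section
/- If δ ∈ Δ satisfies all four of properties (P1), (P2), (P3), (P4), then δ is a Pareto cut. -/
open Finset

private lemma mono_aux (L : ℕ) (x : ℕ → ℝ)
    (hx : ∀ ℓ, 1 ≤ ℓ → ℓ ≤ L → x ℓ ≤ x (ℓ + 1)) :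
    ∀ a b, 1 ≤ a → a ≤ b → b ≤ L + 1 → x a ≤ x b := by
  intro a b ha hab hb
  induction b with
  | zero => omega
  | succ n ih =>
    rcases Nat.lt_or_ge a (n + 1) with h | h
    · exact le_trans (ih (by omega) (by omega)) (hx n (by omega) (by omega))
    · have hne : a = n + 1 := by omega
      rw [hne]

private lemma sum_tel (x : ℕ → ℝ) (m k : ℕ) (h : m ≤ k + 1) :
    ∑ ℓ ∈ Finset.Icc m k, (x (ℓ + 1) - x ℓ) = x (k + 1) - x m := by
  rw [← Finset.Ico_add_one_right_eq_Icc, Finset.sum_Ico_eq_sum_range]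
  have h2 := Finset.sum_range_sub (fun i => x (m + i)) (k + 1 - m)
  have h3 : m + (k + 1 - m) = k + 1 := by omega
  calc ∑ i ∈ Finset.range (k + 1 - m), (x (m + i + 1) - x (m + i))
      = ∑ i ∈ Finset.range (k + 1 - m), (x (m + (i + 1)) - x (m + i)) := by
        apply Finset.sum_congr rfl; intro i _; rw [Nat.add_assoc]
    _ = x (m + (k + 1 - m)) - x (m + 0) := h2
    _ = x (k + 1) - x m := by rw [h3]; norm_num

private lemma sum_run (ρ x : ℕ → ℝ) (m k : ℕ) (h : m ≤ k + 1) :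
    ∑ ℓ ∈ Finset.Icc m k, (max 0 (ρ ℓ - x ℓ) - (x (ℓ + 1) - x ℓ))
      = (∑ ℓ ∈ Finset.Icc m k, max 0 (ρ ℓ - x ℓ)) - (x (k + 1) - x m) := by
  rw [Finset.sum_sub_distrib, sum_tel x m k h]

private lemma sum_single_max (ρ x : ℕ → ℝ) (m k j : ℕ) (hm : m ≤ j) (hj : j ≤ k)
    (hx : ∀ ℓ, m ≤ ℓ → ℓ ≤ k → ℓ ≠ j → ρ ℓ - x ℓ ≤ 0) :
    ∑ ℓ ∈ Finset.Icc m k, max 0 (ρ ℓ - x ℓ) = max 0 (ρ j - x j) := by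
  apply Finset.sum_eq_single_of_mem j (Finset.mem_Icc.mpr ⟨hm, hj⟩)
  intro b hb hbj
  rw [Finset.mem_Icc] at hb
  exact max_eq_left (hx b hb.1 hb.2 hbj)

private lemma sum_two_max (ρ x : ℕ → ℝ) (m k j t : ℕ) (hm : m ≤ j) (hjt : j < t) (ht : t ≤ k)
    (hx : ∀ ℓ, m ≤ ℓ → ℓ ≤ k → ℓ ≠ j → ℓ ≠ t → ρ ℓ - x ℓ ≤ 0) :
    ∑ ℓ ∈ Finset.Icc m k, max 0 (ρ ℓ - x ℓ) = max 0 (ρ j - x j) + max 0 (ρ t - x t) := by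
  have hsub : ({j, t} : Finset ℕ) ⊆ Finset.Icc m k := by
    intro b hb
    simp only [Finset.mem_insert, Finset.mem_singleton] at hb
    rcases hb with rfl | rfl <;> rw [Finset.mem_Icc] <;> omega
  have h0 : ∀ b ∈ Finset.Icc m k, b ∉ ({j, t} : Finset ℕ) → max 0 (ρ b - x b) = 0 := by
    intro b hb hbn
    simp only [Finset.mem_insert, Finset.mem_singleton, not_or] at hbn
    rw [Finset.mem_Icc] at hb
    exact max_eq_left (hx b hb.1 hb.2 hbn.1 hbn.2)
  rw [← Finset.sum_subset hsub h0, Finset.sum_pair (show j ≠ t by omega)]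

private lemma two_le_sum_max (ρ x : ℕ → ℝ) (m k j t : ℕ) (hm : m ≤ j) (hjt : j < t)
    (ht : t ≤ k) :
    max 0 (ρ j - x j) + max 0 (ρ t - x t) ≤ ∑ ℓ ∈ Finset.Icc m k, max 0 (ρ ℓ - x ℓ) := by
  have hsub : ({j, t} : Finset ℕ) ⊆ Finset.Icc m k := by
    intro b hb
    simp only [Finset.mem_insert, Finset.mem_singleton] at hb
    rcases hb with rfl | rfl <;> rw [Finset.mem_Icc] <;> omega
  have h := Finset.sum_le_sum_of_subset_of_nonneg hsub
    (fun i _ _ => le_max_left 0 (ρ i - x i))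
  rwa [Finset.sum_pair (show j ≠ t by omega)] at h

theorem stmt10
    (N L : ℕ) (hL1 : 1 ≤ L) (hLN : L ≤ N)
    (ρ : ℕ → ℝ)
    (hρpos : ∀ ℓ, 1 ≤ ℓ → ℓ ≤ N + 1 → ℓ ≠ L + 1 → 0 < ρ ℓ)
    (hρ0 : ρ (L + 1) = 0)
    (δ : ℕ → ℝ) (hδ : memDelta L ρ δ)
    (h1 : P1 L ρ δ) (h2 : P2 ρ δ) (h3 : P3 L ρ δ) (h4 : P4 L ρ δ) :
    paretoDelta N L ρ δ := by
  classical
  rintro ⟨δ', hδ'mem, hdom, w0, hw0W, hw0lt⟩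
  obtain ⟨hδ0, hδmono, hδub⟩ := hδ
  obtain ⟨hδ'0, hδ'mono, hδ'ub⟩ := hδ'mem
  set T := Tof L ρ δ with hTdef
  have h1' : 1 < T := h1
  have h2' : δ 1 ≤ ρ 1 := h2
  have h3' : ∀ ℓ, 2 ≤ ℓ → ℓ ≤ L → δ ℓ < ρ ℓ → δ ℓ = δ (ℓ + 1) := h3
  have hflat : ∀ ℓ, T ≤ ℓ → ℓ ≤ L + 1 → δ ℓ = δ T := h4
  have hmono := mono_aux L δ hδmono
  have hmono' := mono_aux L δ' hδ'mono
  have hbdd : BddAbove {ℓ : ℕ | 1 ≤ ℓ ∧ ℓ ≤ L + 1 ∧ δ ℓ ≤ ρ ℓ} :=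
    ⟨L + 1, fun ℓ h => h.2.1⟩
  have hne : {ℓ : ℕ | 1 ≤ ℓ ∧ ℓ ≤ L + 1 ∧ δ ℓ ≤ ρ ℓ}.Nonempty := by
    by_contra hc
    rw [Set.not_nonempty_iff_eq_empty] at hc
    have hT0 : T = 0 := by
      rw [hTdef]; unfold Tof; rw [hc]; exact csSup_empty
    omega
  have hTmem : 1 ≤ T ∧ T ≤ L + 1 ∧ δ T ≤ ρ T := Nat.sSup_mem hne hbdd
  have hTmax : ∀ ℓ, 1 ≤ ℓ → ℓ ≤ L + 1 → δ ℓ ≤ ρ ℓ → ℓ ≤ T :=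
    fun ℓ ha hb hd => le_csSup hbdd ⟨ha, hb, hd⟩
  have hhigh : ∀ ℓ, T < ℓ → ℓ ≤ L + 1 → ρ ℓ < δ ℓ := by
    intro ℓ hℓ hℓ'
    by_contra hcon
    push_neg at hcon
    have := hTmax ℓ (by omega) hℓ' hcon
    omega
  have hDL : δ (L + 1) = δ T := hflat (L + 1) hTmem.2.1 le_rfl
  -- domination at 0/1 test vectors
  have hvS : ∀ S : Finset ℕ, S ⊆ Finset.Icc 1 L →
      δ' (L + 1) + ∑ ℓ ∈ S, (max 0 (ρ ℓ - δ' ℓ) - (δ' (ℓ + 1) - δ' ℓ))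
        ≤ δ (L + 1) + ∑ ℓ ∈ S, (max 0 (ρ ℓ - δ ℓ) - (δ (ℓ + 1) - δ ℓ)) := by
    intro S hS
    have hw : memW N L (fun ℓ => if ℓ ∈ S ∨ L + 1 ≤ ℓ then (1 : ℝ) else 0) := by
      refine ⟨fun ℓ _ _ => ?_, ?_⟩
      · dsimp only; split <;> norm_num
      · simp
    have hkey : ∀ x : ℕ → ℝ,
        ∑ ℓ ∈ Finset.Icc 1 L, (max 0 (ρ ℓ - x ℓ) - (x (ℓ + 1) - x ℓ)) *
          (if ℓ ∈ S ∨ L + 1 ≤ ℓ then (1 : ℝ) else 0)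
        = ∑ ℓ ∈ S, (max 0 (ρ ℓ - x ℓ) - (x (ℓ + 1) - x ℓ)) := by
      intro x
      have hcg : ∀ ℓ ∈ Finset.Icc 1 L,
          (max 0 (ρ ℓ - x ℓ) - (x (ℓ + 1) - x ℓ)) * (if ℓ ∈ S ∨ L + 1 ≤ ℓ then (1 : ℝ) else 0)
          = if ℓ ∈ S then (max 0 (ρ ℓ - x ℓ) - (x (ℓ + 1) - x ℓ)) else 0 := by
        intro ℓ hℓ
        rw [Finset.mem_Icc] at hℓ
        have hnl : ¬ (L + 1 ≤ ℓ) := by omega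
        by_cases hmem : ℓ ∈ S <;> simp [hmem, hnl]
      rw [Finset.sum_congr rfl hcg, Finset.sum_ite_mem, Finset.inter_eq_right.mpr hS]
    have hd := hdom _ hw
    unfold Jfun at hd
    rwa [hkey δ', hkey δ] at hd
  have hempty : δ' (L + 1) ≤ δ (L + 1) := by
    have := hvS ∅ (Finset.empty_subset _)
    simpa using this
  -- greatest anchor below a position
  have anchor : ∀ m, 1 ≤ m → ∃ j, 1 ≤ j ∧ j ≤ m ∧ δ j ≤ ρ j ∧
      ∀ ℓ, j < ℓ → ℓ ≤ m → ρ ℓ < δ ℓ := by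
    intro m hm
    have hP1 : (fun j => 1 ≤ j ∧ δ j ≤ ρ j) 1 := ⟨le_rfl, h2'⟩
    refine ⟨Nat.findGreatest (fun j => 1 ≤ j ∧ δ j ≤ ρ j) m,
      Nat.le_findGreatest (P := fun j => 1 ≤ j ∧ δ j ≤ ρ j) hm hP1,
      Nat.findGreatest_le (P := fun j => 1 ≤ j ∧ δ j ≤ ρ j) m,
      (Nat.findGreatest_spec (P := fun j => 1 ≤ j ∧ δ j ≤ ρ j) hm hP1).2, ?_⟩
    intro ℓ hℓ hℓm
    have hnp := Nat.findGreatest_is_greatest (P := fun j => 1 ≤ j ∧ δ j ≤ ρ j) hℓ hℓm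
    have hnp' : ¬ (1 ≤ ℓ ∧ δ ℓ ≤ ρ ℓ) := hnp
    have h1ℓ : 1 ≤ ℓ := by
      have := Nat.le_findGreatest (P := fun j => 1 ≤ j ∧ δ j ≤ ρ j) hm hP1
      omega
    by_contra hcon
    push_neg at hcon
    exact hnp' ⟨h1ℓ, hcon⟩
  -- step: top equalities
  have htop : δ' (L + 1) = δ (L + 1) ∧ ∀ ℓ, T ≤ ℓ → ℓ ≤ L + 1 → δ' ℓ = δ T := by
    rcases eq_or_lt_of_le hTmem.2.1 with hTL | hTL
    · -- T = L + 1
      have hd0 : δ (L + 1) ≤ 0 := by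
        have h := hTmem.2.2
        rw [hTL, hρ0] at h
        exact h
      have hd0' : 0 ≤ δ (L + 1) := le_trans hδ0 (hmono 1 (L + 1) le_rfl (by omega) le_rfl)
      have hd'0' : 0 ≤ δ' (L + 1) := le_trans hδ'0 (hmono' 1 (L + 1) le_rfl (by omega) le_rfl)
      have he : δ (L + 1) = 0 := le_antisymm hd0 hd0'
      have he' : δ' (L + 1) = 0 := le_antisymm (by linarith) hd'0'
      refine ⟨by rw [he, he'], fun ℓ hℓ hℓ' => ?_⟩
      have hll : ℓ = L + 1 := by omega
      rw [hll, he', ← hDL, he]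
    · -- T ≤ L
      have hTL' : T ≤ L := by omega
      obtain ⟨j, hj1, hjle, hjρ, hjmax⟩ := anchor (T - 1) (by omega)
      have hsub : Finset.Icc j L ⊆ Finset.Icc 1 L := by
        intro b hb
        rw [Finset.mem_Icc] at hb ⊢
        omega
      have hdomS := hvS (Finset.Icc j L) hsub
      rw [sum_run ρ δ' j L (by omega), sum_run ρ δ j L (by omega)] at hdomS
      have hδsum : ∑ ℓ ∈ Finset.Icc j L, max 0 (ρ ℓ - δ ℓ)
          = max 0 (ρ j - δ j) + max 0 (ρ T - δ T) := by
        apply sum_two_max ρ δ j L j T le_rfl (by omega) hTL'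
        intro ℓ hℓ1 hℓ2 hℓ3 hℓ4
        rcases Nat.lt_or_ge ℓ T with hc | hc
        · have := hjmax ℓ (by omega) (by omega); linarith
        · have := hhigh ℓ (by omega) (by omega); linarith
      have hδ'sum : max 0 (ρ j - δ' j) + max 0 (ρ T - δ' T)
          ≤ ∑ ℓ ∈ Finset.Icc j L, max 0 (ρ ℓ - δ' ℓ) :=
        two_le_sum_max ρ δ' j L j T le_rfl (by omega) hTL'
      have e1 : max 0 (ρ j - δ j) = ρ j - δ j := max_eq_right (by linarith)
      have e2 : max 0 (ρ T - δ T) = ρ T - δ T := max_eq_right (by linarith [hTmem.2.2])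
      have e3 : ρ j - δ' j ≤ max 0 (ρ j - δ' j) := le_max_right _ _
      have e4 : ρ T - δ' T ≤ max 0 (ρ T - δ' T) := le_max_right _ _
      rw [hδsum, e1, e2] at hdomS
      have hδTδ'T : δ T ≤ δ' T := by linarith
      have hd'ge : δ T ≤ δ' (L + 1) :=
        le_trans hδTδ'T (hmono' T (L + 1) (by omega) (by omega) le_rfl)
      have heqD : δ' (L + 1) = δ (L + 1) := le_antisymm hempty (by rw [hDL]; exact hd'ge)
      refine ⟨heqD, fun ℓ hℓ hℓ' => ?_⟩
      have hub : δ' ℓ ≤ δ T := by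
        have hδℓ := hmono' ℓ (L + 1) (by omega) hℓ' le_rfl
        rw [heqD, hDL] at hδℓ
        exact hδℓ
      have hlb : δ T ≤ δ' ℓ := le_trans hδTδ'T (hmono' T ℓ (by omega) hℓ (by omega))
      exact le_antisymm hub hlb
  -- lower bounds below T
  have hlow : ∀ m, 2 ≤ m → m ≤ T → δ m ≤ δ' m := by
    intro m h2m hmT
    obtain ⟨j, hj1, hjle, hjρ, hjmax⟩ := anchor (m - 1) (by omega)
    have hsub : Finset.Icc j (m - 1) ⊆ Finset.Icc 1 L := by
      intro b hb
      rw [Finset.mem_Icc] at hb ⊢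
      omega
    have hdomS := hvS (Finset.Icc j (m - 1)) hsub
    have hm1 : m - 1 + 1 = m := by omega
    rw [sum_run ρ δ' j (m - 1) (by omega), sum_run ρ δ j (m - 1) (by omega), hm1] at hdomS
    have hδsum : ∑ ℓ ∈ Finset.Icc j (m - 1), max 0 (ρ ℓ - δ ℓ) = max 0 (ρ j - δ j) := by
      apply sum_single_max ρ δ j (m - 1) j le_rfl hjle
      intro ℓ hℓ1 hℓ2 hℓ3
      have := hjmax ℓ (by omega) hℓ2
      linarith
    have hδ'sum : max 0 (ρ j - δ' j) ≤ ∑ ℓ ∈ Finset.Icc j (m - 1), max 0 (ρ ℓ - δ' ℓ) :=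
      Finset.single_le_sum (fun i _ => le_max_left 0 (ρ i - δ' i))
        (Finset.mem_Icc.mpr ⟨le_rfl, hjle⟩)
    have e1 : max 0 (ρ j - δ j) = ρ j - δ j := max_eq_right (by linarith)
    have e3 : ρ j - δ' j ≤ max 0 (ρ j - δ' j) := le_max_right _ _
    have hD := htop.1
    rw [hδsum, e1] at hdomS
    linarith
  -- downward induction: equality on [2, T]
  have heqT : ∀ d ℓ, ℓ + d = T → 2 ≤ ℓ → δ' ℓ = δ ℓ := by
    intro d
    induction d with
    | zero =>
      intro ℓ hℓ h2ℓ
      have hll : ℓ = T := by omega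
      rw [hll, htop.2 T le_rfl hTmem.2.1, hflat T le_rfl hTmem.2.1]
    | succ n ih =>
      intro ℓ hℓ h2ℓ
      have hℓT : ℓ < T := by omega
      have hℓL : ℓ ≤ L := by omega
      have hnext : δ' (ℓ + 1) = δ (ℓ + 1) := ih (ℓ + 1) (by omega) (by omega)
      have hsing := hvS {ℓ} (by
        intro b hb
        rw [Finset.mem_singleton] at hb
        rw [Finset.mem_Icc]
        omega)
      rw [Finset.sum_singleton, Finset.sum_singleton] at hsing
      have hkey : max 0 (ρ ℓ - δ' ℓ) + δ' ℓ ≤ max 0 (ρ ℓ - δ ℓ) + δ ℓ := by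
        have hD := htop.1
        rw [hnext] at hsing
        linarith
      have hlb := hlow ℓ h2ℓ (by omega)
      rcases lt_or_ge (δ ℓ) (ρ ℓ) with hc | hc
      · have hp3 := h3' ℓ h2ℓ hℓL hc
        have hmm : δ' ℓ ≤ δ' (ℓ + 1) := hδ'mono ℓ (by omega) hℓL
        rw [hnext, ← hp3] at hmm
        exact le_antisymm hmm hlb
      · have e0 : max 0 (ρ ℓ - δ ℓ) = 0 := max_eq_left (by linarith)
        have h6 : (0 : ℝ) ≤ max 0 (ρ ℓ - δ' ℓ) := le_max_left _ _
        have hub : δ' ℓ ≤ δ ℓ := by linarith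
        exact le_antisymm hub hlb
  have heqAll : ∀ ℓ, 2 ≤ ℓ → ℓ ≤ L + 1 → δ' ℓ = δ ℓ := by
    intro ℓ h2ℓ hℓ'
    rcases le_or_gt ℓ T with hc | hc
    · exact heqT (T - ℓ) ℓ (by omega) h2ℓ
    · rw [htop.2 ℓ (by omega) hℓ', hflat ℓ (by omega) hℓ']
  -- coefficient equality
  have hcoef : ∀ ℓ, 1 ≤ ℓ → ℓ ≤ L →
      max 0 (ρ ℓ - δ' ℓ) - (δ' (ℓ + 1) - δ' ℓ) = max 0 (ρ ℓ - δ ℓ) - (δ (ℓ + 1) - δ ℓ) := by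
    intro ℓ h1ℓ hℓL
    rcases Nat.lt_or_ge ℓ 2 with hc | hc
    · have hℓ1 : ℓ = 1 := by omega
      subst hℓ1
      have h2eq : δ' (1 + 1) = δ (1 + 1) := heqAll (1 + 1) (by omega) (by omega)
      have hsing := hvS {1} (by
        intro b hb
        rw [Finset.mem_singleton] at hb
        rw [Finset.mem_Icc]
        omega)
      rw [Finset.sum_singleton, Finset.sum_singleton] at hsing
      have e1 : max 0 (ρ 1 - δ 1) = ρ 1 - δ 1 := max_eq_right (by linarith)
      have e3 : ρ 1 - δ' 1 ≤ max 0 (ρ 1 - δ' 1) := le_max_right _ _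
      have hD := htop.1
      have hle : max 0 (ρ 1 - δ' 1) - (δ' (1 + 1) - δ' 1)
          ≤ max 0 (ρ 1 - δ 1) - (δ (1 + 1) - δ 1) := by linarith
      have hge : max 0 (ρ 1 - δ 1) - (δ (1 + 1) - δ 1)
          ≤ max 0 (ρ 1 - δ' 1) - (δ' (1 + 1) - δ' 1) := by
        rw [e1, h2eq]
        linarith
      linarith
    · rw [heqAll ℓ hc (by omega), heqAll (ℓ + 1) (by omega) (by omega)]
  -- conclude
  have hJeq : ∀ w : ℕ → ℝ, Jfun L ρ w δ' = Jfun L ρ w δ := by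
    intro w
    unfold Jfun
    rw [htop.1]
    congr 1
    apply Finset.sum_congr rfl
    intro ℓ hℓ
    rw [Finset.mem_Icc] at hℓ
    rw [hcoef ℓ hℓ.1 hℓ.2]
  rw [hJeq w0] at hw0lt
  exact lt_irrefl _ hw0lt
end

section
/- Let δ ∈ Δ. Then δ is a Pareto cut if and only if there does not exist δ' ∈ Δ that satisfies all four of properties (P1), (P2), (P3), (P4) and dominates δ. -/
open Finset

section Aux

lemma mono_delta {L : ℕ} {ρ δ : ℕ → ℝ} (hδ : memDelta L ρ δ) :
    ∀ a b, 1 ≤ a → a ≤ b → b ≤ L + 1 → δ a ≤ δ b := by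
  intro a b ha hab hb
  induction b, hab using Nat.le_induction with
  | base => exact le_refl _
  | succ n hn ih =>
    exact le_trans (ih (by omega)) (hδ.2.1 n (by omega) (by omega))

lemma rbar_ge {L : ℕ} (ρ : ℕ → ℝ) {ℓ : ℕ} (h1 : 1 ≤ ℓ) (h2 : ℓ ≤ L + 1) :
    ρ ℓ ≤ rbar L ρ :=
  Finset.le_sup' ρ (by simp [Finset.mem_Icc]; omega)

lemma rbar_attained (L : ℕ) (ρ : ℕ → ℝ) :
    ∃ ℓ, 1 ≤ ℓ ∧ ℓ ≤ L + 1 ∧ ρ ℓ = rbar L ρ := by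
  obtain ⟨b, hb, hbe⟩ := Finset.exists_mem_eq_sup'
    (Finset.nonempty_Icc.mpr (by omega : (1:ℕ) ≤ L + 1)) ρ
  simp only [Finset.mem_Icc] at hb
  exact ⟨b, hb.1, hb.2, hbe.symm⟩

lemma Tset_bdd (L : ℕ) (ρ δ : ℕ → ℝ) :
    BddAbove {ℓ : ℕ | 1 ≤ ℓ ∧ ℓ ≤ L + 1 ∧ δ ℓ ≤ ρ ℓ} :=
  ⟨L + 1, fun _ hx => hx.2.1⟩

lemma Tof_mem {L : ℕ} {ρ δ : ℕ → ℝ} (hδ : memDelta L ρ δ) :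
    1 ≤ Tof L ρ δ ∧ Tof L ρ δ ≤ L + 1 ∧ δ (Tof L ρ δ) ≤ ρ (Tof L ρ δ) := by
  have hne : {ℓ : ℕ | 1 ≤ ℓ ∧ ℓ ≤ L + 1 ∧ δ ℓ ≤ ρ ℓ}.Nonempty := by
    obtain ⟨ℓ, h1, h2, h3⟩ := rbar_attained L ρ
    exact ⟨ℓ, h1, h2, le_trans (mono_delta hδ ℓ (L+1) h1 h2 (le_refl _)) (h3 ▸ hδ.2.2)⟩
  exact Nat.sSup_mem hne (Tset_bdd L ρ δ)

lemma le_Tof {L : ℕ} {ρ δ : ℕ → ℝ} {ℓ : ℕ} (h1 : 1 ≤ ℓ) (h2 : ℓ ≤ L + 1)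
    (h3 : δ ℓ ≤ ρ ℓ) : ℓ ≤ Tof L ρ δ :=
  le_csSup (Tset_bdd L ρ δ) ⟨h1, h2, h3⟩

lemma Tof_max {L : ℕ} {ρ δ : ℕ → ℝ} {ℓ : ℕ} (h1 : Tof L ρ δ < ℓ) (h2 : ℓ ≤ L + 1) :
    ρ ℓ < δ ℓ := by
  by_contra h
  exact absurd (le_Tof (by omega) h2 (le_of_not_gt h)) (by omega)

lemma J_le_termwise {L : ℕ} {ρ : ℕ → ℝ} (δ₂ δ₁ : ℕ → ℝ)
    (h0 : δ₂ (L + 1) ≤ δ₁ (L + 1))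
    (hc : ∀ ℓ, 1 ≤ ℓ → ℓ ≤ L →
      max 0 (ρ ℓ - δ₂ ℓ) - (δ₂ (ℓ + 1) - δ₂ ℓ) ≤ max 0 (ρ ℓ - δ₁ ℓ) - (δ₁ (ℓ + 1) - δ₁ ℓ))
    (w : ℕ → ℝ) (hw : ∀ ℓ, 1 ≤ ℓ → ℓ ≤ L → 0 ≤ w ℓ) :
    Jfun L ρ w δ₂ ≤ Jfun L ρ w δ₁ := by
  refine add_le_add h0 (Finset.sum_le_sum fun ℓ hℓ => ?_)
  simp only [Finset.mem_Icc] at hℓ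
  exact mul_le_mul_of_nonneg_right (hc ℓ hℓ.1 hℓ.2) (hw ℓ hℓ.1 hℓ.2)

lemma tele_s11 (g : ℕ → ℝ) (n : ℕ) :
    ∑ ℓ ∈ Finset.Icc 1 n, (g (ℓ + 1) - g ℓ) = g (n + 1) - g 1 := by
  induction n with
  | zero => simp
  | succ n ih => rw [Finset.sum_Icc_succ_top (by omega), ih]; ring

lemma cap_J_le {L : ℕ} {ρ δ : ℕ → ℝ}
    (hmono : ∀ ℓ, 1 ≤ ℓ → ℓ ≤ L → δ ℓ ≤ δ (ℓ + 1))
    {v : ℝ} (hv : ∀ ℓ, 1 ≤ ℓ → ℓ ≤ L → v < δ ℓ → ρ ℓ ≤ v)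
    (w : ℕ → ℝ) (hw : ∀ ℓ, 1 ≤ ℓ → ℓ ≤ L → 0 ≤ w ℓ ∧ w ℓ ≤ 1) :
    Jfun L ρ w (fun ℓ => min (δ ℓ) v) ≤ Jfun L ρ w δ := by
  have hterm : ∀ ℓ ∈ Finset.Icc 1 L,
      (max 0 (ρ ℓ - min (δ ℓ) v) - (min (δ (ℓ + 1)) v - min (δ ℓ) v)) * w ℓ ≤
        (max 0 (ρ ℓ - δ ℓ) - (δ (ℓ + 1) - δ ℓ)) * w ℓ
          + (max (δ (ℓ + 1)) v - max (δ ℓ) v) := by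
    intro ℓ hℓ
    simp only [Finset.mem_Icc] at hℓ
    obtain ⟨hw0, hw1⟩ := hw ℓ hℓ.1 hℓ.2
    have hxy : δ ℓ ≤ δ (ℓ + 1) := hmono ℓ hℓ.1 hℓ.2
    have E1 : max 0 (ρ ℓ - min (δ ℓ) v) = max 0 (ρ ℓ - δ ℓ) := by
      rcases le_or_gt (δ ℓ) v with h | h
      · rw [min_eq_left h]
      · have hρ := hv ℓ hℓ.1 hℓ.2 h
        rw [min_eq_right h.le, max_eq_left (by linarith), max_eq_left (by linarith)]
    rw [E1]
    have e1 : min (δ ℓ) v = δ ℓ + v - max (δ ℓ) v := by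
      have := min_add_max (δ ℓ) v; linarith
    have e2 : min (δ (ℓ + 1)) v = δ (ℓ + 1) + v - max (δ (ℓ + 1)) v := by
      have := min_add_max (δ (ℓ + 1)) v; linarith
    rw [e1, e2]
    have h3 : max (δ ℓ) v ≤ max (δ (ℓ + 1)) v := max_le_max hxy (le_refl v)
    nlinarith [mul_nonneg (sub_nonneg.mpr h3) (sub_nonneg.mpr hw1)]
  have hsum := Finset.sum_le_sum hterm
  rw [Finset.sum_add_distrib, tele_s11 (fun ℓ => max (δ ℓ) v) L] at hsum
  have hmm := min_add_max (δ (L + 1)) v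
  have h1v : v ≤ max (δ 1) v := le_max_right _ _
  simp only [Jfun]
  linarith

open Classical in
noncomputable def fixAux (L : ℕ) (ρ δ : ℕ → ℝ) : ℕ → ℝ
  | 0 => δ (L + 1)
  | (m + 1) => if 2 ≤ L - m ∧ ρ (L - m) ≤ δ (L - m) then δ (L - m)
      else min (ρ (L - m)) (fixAux L ρ δ m)

noncomputable def fixD (L : ℕ) (ρ δ : ℕ → ℝ) (ℓ : ℕ) : ℝ := fixAux L ρ δ (L + 1 - ℓ)

lemma fixD_top (L : ℕ) (ρ δ : ℕ → ℝ) : fixD L ρ δ (L + 1) = δ (L + 1) := by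
  simp [fixD, fixAux]

lemma fixD_eq (L : ℕ) (ρ δ : ℕ → ℝ) {ℓ : ℕ} (h1 : 1 ≤ ℓ) (h2 : ℓ ≤ L) :
    fixD L ρ δ ℓ = if 2 ≤ ℓ ∧ ρ ℓ ≤ δ ℓ then δ ℓ else min (ρ ℓ) (fixD L ρ δ (ℓ + 1)) := by
  have e1 : L + 1 - ℓ = (L - ℓ) + 1 := by omega
  have e2 : L - (L - ℓ) = ℓ := by omega
  have e3 : L + 1 - (ℓ + 1) = L - ℓ := by omega
  rw [fixD, e1, fixAux, e2, fixD, e3]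

lemma fixD_ge_aux {L : ℕ} {ρ δ : ℕ → ℝ} (hδ : ∀ ℓ, 1 ≤ ℓ → ℓ ≤ L → δ ℓ ≤ δ (ℓ + 1)) :
    ∀ m, m ≤ L - 1 → δ (L + 1 - m) ≤ fixAux L ρ δ m := by
  intro m
  induction m with
  | zero => simp [fixAux]
  | succ n ih =>
    intro h
    have hp2 : 2 ≤ L - n := by omega
    have hpL : L - n ≤ L := by omega
    have e : L + 1 - (n + 1) = L - n := by omega
    rw [fixAux, e]
    split_ifs with hc
    · exact le_refl _
    · have hρ : δ (L - n) < ρ (L - n) := by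
        by_contra hh
        exact hc ⟨hp2, le_of_not_gt hh⟩
      refine le_min (le_of_lt hρ) ?_
      have h1 : δ (L - n) ≤ δ (L - n + 1) := hδ _ (by omega) hpL
      have h2 : δ (L + 1 - n) ≤ fixAux L ρ δ n := ih (by omega)
      have e2 : L + 1 - n = L - n + 1 := by omega
      rw [e2] at h2
      exact le_trans h1 h2

lemma fixD_ge {L : ℕ} {ρ δ : ℕ → ℝ} (hδ : ∀ ℓ, 1 ≤ ℓ → ℓ ≤ L → δ ℓ ≤ δ (ℓ + 1))
    {ℓ : ℕ} (h1 : 2 ≤ ℓ) (h2 : ℓ ≤ L + 1) : δ ℓ ≤ fixD L ρ δ ℓ := by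
  have := fixD_ge_aux (ρ := ρ) hδ (L + 1 - ℓ) (by omega)
  rwa [show L + 1 - (L + 1 - ℓ) = ℓ from by omega] at this

lemma fixD_mono {L : ℕ} {ρ δ : ℕ → ℝ} (hδ : ∀ ℓ, 1 ≤ ℓ → ℓ ≤ L → δ ℓ ≤ δ (ℓ + 1))
    {ℓ : ℕ} (h1 : 1 ≤ ℓ) (h2 : ℓ ≤ L) : fixD L ρ δ ℓ ≤ fixD L ρ δ (ℓ + 1) := by
  rw [fixD_eq L ρ δ h1 h2]
  split_ifs with hc
  · exact le_trans (hδ ℓ h1 h2) (fixD_ge hδ (by omega) (by omega))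
  · exact min_le_right _ _

lemma fixD_one {L : ℕ} (ρ δ : ℕ → ℝ) (hL1 : 1 ≤ L) :
    fixD L ρ δ 1 = min (ρ 1) (fixD L ρ δ 2) := by
  rw [fixD_eq L ρ δ (le_refl 1) hL1]
  simp

lemma fixD_c_le {L : ℕ} {ρ δ : ℕ → ℝ} (hδ : ∀ ℓ, 1 ≤ ℓ → ℓ ≤ L → δ ℓ ≤ δ (ℓ + 1))
    {ℓ : ℕ} (h1 : 1 ≤ ℓ) (h2 : ℓ ≤ L) :
    max 0 (ρ ℓ - fixD L ρ δ ℓ) - (fixD L ρ δ (ℓ + 1) - fixD L ρ δ ℓ) ≤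
      max 0 (ρ ℓ - δ ℓ) - (δ (ℓ + 1) - δ ℓ) := by
  have hge : δ (ℓ + 1) ≤ fixD L ρ δ (ℓ + 1) := fixD_ge hδ (by omega) (by omega)
  rw [fixD_eq L ρ δ h1 h2]
  split_ifs with hc
  · linarith
  · set D := fixD L ρ δ (ℓ + 1) with hD
    have hmin : min (ρ ℓ) D ≤ ρ ℓ := min_le_left _ _
    have hmax : max 0 (ρ ℓ - min (ρ ℓ) D) = ρ ℓ - min (ρ ℓ) D :=
      max_eq_right (by linarith)
    have hmax2 : ρ ℓ - δ ℓ ≤ max 0 (ρ ℓ - δ ℓ) := le_max_right _ _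
    rw [hmax]
    linarith

end Aux

lemma key_normalize
    (N L : ℕ) (hL1 : 1 ≤ L) (hLN : L ≤ N)
    (ρ : ℕ → ℝ)
    (hρpos : ∀ ℓ, 1 ≤ ℓ → ℓ ≤ N + 1 → ℓ ≠ L + 1 → 0 < ρ ℓ)
    (hρ0 : ρ (L + 1) = 0)
    (δ' : ℕ → ℝ) (h' : memDelta L ρ δ') :
    ∃ δ'', memDelta L ρ δ'' ∧ (P1 L ρ δ'' ∧ P2 ρ δ'' ∧ P3 L ρ δ'' ∧ P4 L ρ δ'') ∧
      ∀ w, memW N L w → Jfun L ρ w δ'' ≤ Jfun L ρ w δ' := by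
  have hρ1 : 0 < ρ 1 := hρpos 1 le_rfl (by omega) (by omega)
  have hmono' := h'.2.1
  set δ₂ := fixD L ρ δ' with hδ₂def
  have h2top : δ₂ (L + 1) = δ' (L + 1) := fixD_top L ρ δ'
  have h2mono : ∀ ℓ, 1 ≤ ℓ → ℓ ≤ L → δ₂ ℓ ≤ δ₂ (ℓ + 1) :=
    fun ℓ a b => fixD_mono hmono' a b
  have h20 : 0 ≤ δ₂ 1 := by
    rw [hδ₂def, fixD_one ρ δ' hL1]
    refine le_min hρ1.le ?_
    exact le_trans (le_trans h'.1 (hmono' 1 le_rfl hL1)) (fixD_ge hmono' le_rfl (by omega))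
  have hm2 : memDelta L ρ δ₂ := ⟨h20, h2mono, by rw [h2top]; exact h'.2.2⟩
  have hP2₂ : δ₂ 1 ≤ ρ 1 := by
    rw [hδ₂def, fixD_one ρ δ' hL1]; exact min_le_left _ _
  have hP3₂ : ∀ ℓ, 2 ≤ ℓ → ℓ ≤ L → δ₂ ℓ < ρ ℓ → δ₂ ℓ = δ₂ (ℓ + 1) := by
    intro ℓ h2 hLℓ hlt
    rw [hδ₂def, fixD_eq L ρ δ' (by omega) hLℓ] at hlt ⊢
    split_ifs at hlt ⊢ with hc
    · linarith [hc.2]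
    · rcases min_cases (ρ ℓ) (fixD L ρ δ' (ℓ + 1)) with ⟨he, _⟩ | ⟨he, _⟩
      · rw [he] at hlt; linarith
      · exact he
  have hJ2 : ∀ w, memW N L w → Jfun L ρ w δ₂ ≤ Jfun L ρ w δ' := fun w hw =>
    J_le_termwise δ₂ δ' (le_of_eq h2top) (fun ℓ a b => fixD_c_le hmono' a b) w
      (fun ℓ a b => (hw.1 ℓ a (by omega)).1)
  -- the index T and the cap level v
  set T := Tof L ρ δ₂ with hTdef
  obtain ⟨hT1, hT2, hT3⟩ := Tof_mem hm2
  have hTmax : ∀ ℓ, T < ℓ → ℓ ≤ L + 1 → ρ ℓ < δ₂ ℓ := fun ℓ a b => Tof_max a b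
  have hSne : (insert T (Finset.Icc (T + 1) L)).Nonempty := ⟨T, Finset.mem_insert_self _ _⟩
  set f : ℕ → ℝ := fun ℓ => if ℓ = T then δ₂ T else ρ ℓ with hfdef
  set v := (insert T (Finset.Icc (T + 1) L)).sup' hSne f with hvdef
  have hfT : f T = δ₂ T := by simp [hfdef]
  have hv1 : δ₂ T ≤ v := by
    have := Finset.le_sup' f (Finset.mem_insert_self T (Finset.Icc (T + 1) L))
    rwa [hfT] at this
  have hv2 : ∀ ℓ, T + 1 ≤ ℓ → ℓ ≤ L → ρ ℓ ≤ v := by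
    intro ℓ ha hb
    have hmem : ℓ ∈ insert T (Finset.Icc (T + 1) L) :=
      Finset.mem_insert_of_mem (Finset.mem_Icc.mpr ⟨ha, hb⟩)
    have := Finset.le_sup' f hmem
    rwa [show f ℓ = ρ ℓ from by simp [hfdef]; omega] at this
  have hv3 : v ≤ rbar L ρ := by
    refine Finset.sup'_le _ _ ?_
    intro b hb
    rcases Finset.mem_insert.mp hb with hbT | hbI
    · subst hbT
      rw [hfT]
      exact le_trans hT3 (rbar_ge ρ hT1 hT2)
    · rw [Finset.mem_Icc] at hbI
      rw [show f b = ρ b from by simp [hfdef]; omega]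
      exact rbar_ge ρ (by omega) (by omega)
  have hv0 : 0 ≤ v :=
    le_trans (le_trans h20 (mono_delta hm2 1 T le_rfl hT1 hT2)) hv1
  -- the capped vector δ₃
  set δ₃ : ℕ → ℝ := fun ℓ => min (δ₂ ℓ) v with hδ₃def
  have hcaphyp : ∀ ℓ, 1 ≤ ℓ → ℓ ≤ L → v < δ₂ ℓ → ρ ℓ ≤ v := by
    intro ℓ ha hb hlt
    have hTℓ : T < ℓ := by
      by_contra hh
      push_neg at hh
      have := mono_delta hm2 ℓ T ha hh hT2
      linarith
    exact hv2 ℓ (by omega) hb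
  have hm3 : memDelta L ρ δ₃ :=
    ⟨le_min h20 hv0, fun ℓ a b => min_le_min (h2mono ℓ a b) le_rfl,
      le_trans (min_le_right _ _) hv3⟩
  have hJ3 : ∀ w, memW N L w → Jfun L ρ w δ₃ ≤ Jfun L ρ w δ₂ := fun w hw =>
    cap_J_le h2mono hcaphyp w (fun ℓ a b => hw.1 ℓ a (by omega))
  have hP2₃ : δ₃ 1 ≤ ρ 1 := le_trans (min_le_left _ _) hP2₂
  have hP3₃ : P3 L ρ δ₃ := by
    intro ℓ h2 hLℓ hlt
    rcases le_or_gt (δ₂ ℓ) v with hc | hc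
    · have h3e : δ₃ ℓ = δ₂ ℓ := min_eq_left hc
      have heq := hP3₂ ℓ h2 hLℓ (by rwa [h3e] at hlt)
      show min (δ₂ ℓ) v = min (δ₂ (ℓ + 1)) v
      rw [← heq]
    · have hρv := hcaphyp ℓ (by omega) hLℓ hc
      have h3e : δ₃ ℓ = v := min_eq_right hc.le
      rw [h3e] at hlt
      linarith
  obtain ⟨hT'1, hT'2, hT'3⟩ := Tof_mem hm3
  obtain ⟨b, hbmem, hbv⟩ := Finset.exists_mem_eq_sup' hSne f
  rcases Finset.mem_insert.mp hbmem with hbT | hbI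
  · -- case v = δ₂ T
    rw [hbT] at hbv
    have hvT : v = δ₂ T := by rw [hvdef, hbv, hfT]
    have hfl : ∀ ℓ, T ≤ ℓ → ℓ ≤ L + 1 → δ₃ ℓ = v := by
      intro ℓ ha hb'
      have hmle : δ₂ T ≤ δ₂ ℓ := mono_delta hm2 T ℓ hT1 ha hb'
      show min (δ₂ ℓ) v = v
      exact min_eq_right (by rw [hvT]; exact hmle)
    have hT3' : δ₃ T ≤ ρ T := by
      rw [hfl T le_rfl hT2, hvT]; exact hT3
    have hTle : T ≤ Tof L ρ δ₃ := le_Tof hT1 hT2 hT3'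
    have hP4₃ : P4 L ρ δ₃ := by
      intro ℓ ha hb'
      rw [hfl ℓ (le_trans hTle ha) hb', hfl _ hTle hT'2]
    by_cases hP1c : 2 ≤ Tof L ρ δ₃
    · exact ⟨δ₃, hm3, ⟨hP1c, hP2₃, hP3₃, hP4₃⟩,
        fun w hw => le_trans (hJ3 w hw) (hJ2 w hw)⟩
    · -- fallback : δ₃ is constant with T(δ₃) = 1 ; use the constant m
      have hT'eq : Tof L ρ δ₃ = 1 := by omega
      have hflat : ∀ ℓ, 1 ≤ ℓ → ℓ ≤ L + 1 → δ₃ ℓ = v := fun ℓ a c => hfl ℓ (by omega) c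
      have hmaxρ : ∀ ℓ, 2 ≤ ℓ → ℓ ≤ L + 1 → ρ ℓ < v := by
        intro ℓ a c
        have := Tof_max (δ := δ₃) (by omega : Tof L ρ δ₃ < ℓ) c
        rwa [hflat ℓ (by omega) c] at this
      have hvρ1 : v ≤ ρ 1 := by
        have h := hT'3
        rw [hT'eq] at h
        rwa [hflat 1 le_rfl (by omega)] at h
      have hne2 : (Finset.Icc 2 (L + 1)).Nonempty := Finset.nonempty_Icc.mpr (by omega)
      set m := (Finset.Icc 2 (L + 1)).sup' hne2 ρ with hmdef
      have hmlt : m < v := by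
        rw [hmdef, Finset.sup'_lt_iff]
        intro c hc
        rw [Finset.mem_Icc] at hc
        exact hmaxρ c hc.1 hc.2
      have hm0 : 0 ≤ m := by
        have := Finset.le_sup' ρ (Finset.mem_Icc.mpr ⟨by omega, le_rfl⟩ :
          L + 1 ∈ Finset.Icc 2 (L + 1))
        rw [hρ0] at this
        exact this
      have hmr : m ≤ rbar L ρ := by
        refine Finset.sup'_le _ _ ?_
        intro c hc
        rw [Finset.mem_Icc] at hc
        exact rbar_ge ρ (by omega) hc.2
      set δ₄ : ℕ → ℝ := fun _ => m with hδ₄def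
      have hm4 : memDelta L ρ δ₄ := ⟨hm0, fun _ _ _ => le_rfl, hmr⟩
      have hP2₄ : δ₄ 1 ≤ ρ 1 := le_trans hmlt.le hvρ1
      have hP3₄ : P3 L ρ δ₄ := fun ℓ _ _ _ => rfl
      obtain ⟨b', hb'mem, hb'e⟩ := Finset.exists_mem_eq_sup' hne2 ρ
      rw [Finset.mem_Icc] at hb'mem
      have hT4 : b' ≤ Tof L ρ δ₄ :=
        le_Tof (by omega) hb'mem.2 (le_of_eq (by show m = ρ b'; rw [hmdef, hb'e]))
      have hP1₄ : 1 < Tof L ρ δ₄ := by omega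
      have hP4₄ : P4 L ρ δ₄ := fun ℓ _ _ => rfl
      have hJ4 : ∀ w, memW N L w → Jfun L ρ w δ₄ ≤ Jfun L ρ w δ₃ := by
        intro w hw
        have hJ3e : Jfun L ρ w δ₃ = v + ∑ ℓ ∈ Finset.Icc 1 L, max 0 (ρ ℓ - v) * w ℓ := by
          unfold Jfun
          rw [hflat (L + 1) (by omega) le_rfl]
          congr 1
          refine Finset.sum_congr rfl ?_
          intro ℓ hℓ
          rw [Finset.mem_Icc] at hℓ
          rw [hflat ℓ hℓ.1 (by omega), hflat (ℓ + 1) (by omega) (by omega)]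
          ring_nf
        have hJ4e : Jfun L ρ w δ₄ = m + ∑ ℓ ∈ Finset.Icc 1 L, max 0 (ρ ℓ - m) * w ℓ := by
          unfold Jfun
          show m + _ = _
          congr 1
          refine Finset.sum_congr rfl ?_
          intro ℓ hℓ
          show (max 0 (ρ ℓ - m) - (m - m)) * w ℓ = _
          ring_nf
        rw [hJ3e, hJ4e]
        have hsplit : Finset.Icc 1 L = insert 1 (Finset.Icc 2 L) := by
          ext x
          simp only [Finset.mem_Icc, Finset.mem_insert]
          omega
        have h1notin : (1 : ℕ) ∉ Finset.Icc 2 L := by simp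
        rw [hsplit, Finset.sum_insert h1notin, Finset.sum_insert h1notin]
        have hz : ∀ ℓ ∈ Finset.Icc 2 L, max 0 (ρ ℓ - m) * w ℓ = max 0 (ρ ℓ - v) * w ℓ := by
          intro ℓ hℓ
          rw [Finset.mem_Icc] at hℓ
          have hρm : ρ ℓ ≤ m := Finset.le_sup' ρ (Finset.mem_Icc.mpr ⟨hℓ.1, by omega⟩)
          have hρv : ρ ℓ < v := hmaxρ ℓ hℓ.1 (by omega)
          rw [max_eq_left (by linarith), max_eq_left (by linarith)]
        rw [Finset.sum_congr rfl hz]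
        have hw1 := hw.1 1 le_rfl (by omega)
        have e1 : max 0 (ρ 1 - m) = ρ 1 - m := max_eq_right (by linarith)
        have e2 : max 0 (ρ 1 - v) = ρ 1 - v := max_eq_right (by linarith)
        rw [e1, e2]
        nlinarith [mul_nonneg (sub_nonneg.mpr hmlt.le) (sub_nonneg.mpr hw1.2)]
      exact ⟨δ₄, hm4, ⟨hP1₄, hP2₄, hP3₄, hP4₄⟩,
        fun w hw => le_trans (hJ4 w hw) (le_trans (hJ3 w hw) (hJ2 w hw))⟩
  · -- case v = ρ b with b ∈ [T+1, L]
    rw [Finset.mem_Icc] at hbI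
    have hvb : v = ρ b := by
      rw [hvdef, hbv]
      simp only [hfdef]
      rw [if_neg (by omega)]
    have hδ2b : ρ b < δ₂ b := hTmax b (by omega) (by omega)
    have hfl : ∀ ℓ, b ≤ ℓ → ℓ ≤ L + 1 → δ₃ ℓ = v := by
      intro ℓ ha hb'
      have hmle : δ₂ b ≤ δ₂ ℓ := mono_delta hm2 b ℓ (by omega) ha hb'
      show min (δ₂ ℓ) v = v
      exact min_eq_right (by rw [hvb]; linarith)
    have hbmem3 : b ≤ Tof L ρ δ₃ :=
      le_Tof (by omega) (by omega) (by rw [hfl b le_rfl (by omega), hvb])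
    have hP1₃ : 1 < Tof L ρ δ₃ := by omega
    have hP4₃ : P4 L ρ δ₃ := by
      intro ℓ ha hb'
      rw [hfl ℓ (le_trans hbmem3 ha) hb', hfl _ hbmem3 hT'2]
    exact ⟨δ₃, hm3, ⟨hP1₃, hP2₃, hP3₃, hP4₃⟩,
      fun w hw => le_trans (hJ3 w hw) (hJ2 w hw)⟩

theorem stmt11
    (N L : ℕ) (hL1 : 1 ≤ L) (hLN : L ≤ N)
    (ρ : ℕ → ℝ)
    (hρpos : ∀ ℓ, 1 ≤ ℓ → ℓ ≤ N + 1 → ℓ ≠ L + 1 → 0 < ρ ℓ)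
    (hρ0 : ρ (L + 1) = 0)
    (δ : ℕ → ℝ) (hδ : memDelta L ρ δ) :
    paretoDelta N L ρ δ ↔
      ¬ ∃ δ', memDelta L ρ δ' ∧
        (P1 L ρ δ' ∧ P2 ρ δ' ∧ P3 L ρ δ' ∧ P4 L ρ δ') ∧
        dominatesDelta N L ρ δ' δ := by
  constructor
  · intro hp h
    obtain ⟨δ', h1, _, h3⟩ := h
    exact hp ⟨δ', h1, h3⟩
  · intro h hex
    obtain ⟨δ', hmem, hdom⟩ := hex
    obtain ⟨δ'', hm'', hprops, hJ⟩ := key_normalize N L hL1 hLN ρ hρpos hρ0 δ' hmem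
    refine h ⟨δ'', hm'', hprops, ?_, ?_⟩
    · intro w hw
      exact le_trans (hJ w hw) (hdom.1 w hw)
    · obtain ⟨wb, hwb, hlt⟩ := hdom.2
      exact ⟨wb, hwb, lt_of_le_of_lt (hJ wb hwb) hlt⟩
end
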